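/- arXiv:2012.02703 — 12 statements merged into one kernel-verified Lean document; each statement's English description precedes it below -/
import Mathlib

section
/- Under C-clique influence, if i is maximal and j is minimal at time t, then B_i^{t+1} − B_j^{t+1} ≤ B_i^t − B_j^t (the difference of opinion among extreme agents cannot grow). -/
theorem clique_decreasing_difference (n : ℕ) (hn : 0 < n) (C : ℝ) (hC : C ∈ Set.Ioc (0:ℝ) 1)
    (B : ℕ → Fin n → ℝ) (hB : ∀ t i, B t i ∈ Set.Icc (0:ℝ) 1)
    (hupd : ∀ t i, B (t+1) i = B t i + (C / n) * ∑ k, (B t k - B t i))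
    (t : ℕ) (i j : Fin n) (hmax : ∀ k, B t k ≤ B t i) (hmin : ∀ k, B t j ≤ B t k) :
    B (t+1) i - B (t+1) j ≤ B t i - B t j := by
  have hn' : (n:ℝ) ≠ 0 := Nat.cast_ne_zero.mpr hn.ne'
  have hij : B t j ≤ B t i := hmin i
  have key : B (t+1) i - B (t+1) j = (1 - C) * (B t i - B t j) := by
    rw [hupd, hupd]
    simp only [Finset.sum_sub_distrib, Finset.sum_const, Finset.card_univ, Fintype.card_fin,
      nsmul_eq_mul]
    field_simp
    ring
  rw [key]
  nlinarith [hC.1, hC.2]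
end

section
/- Under C-clique influence with C < 1, let i be maximal and j minimal at time 0 with B_i^0 > B_j^0. For ε > 0, let T_ε = log_{1−C}(ε / (B_i^0 − B_j^0)). Then for every natural number t > T_ε, B_i^t − B_j^t < ε. -/
theorem clique_convergence_time (n : ℕ) (hn : 0 < n) (C : ℝ) (hC : C ∈ Set.Ioo (0:ℝ) 1)
    (B : ℕ → Fin n → ℝ) (hB : ∀ t i, B t i ∈ Set.Icc (0:ℝ) 1)
    (hupd : ∀ t i, B (t+1) i = B t i + (C / n) * ∑ k, (B t k - B t i))
    (i j : Fin n) (hmax : ∀ k, B 0 k ≤ B 0 i) (hmin : ∀ k, B 0 j ≤ B 0 k)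
    (hij : B 0 j < B 0 i) (ε : ℝ) (hε : 0 < ε) :
    ∀ t : ℕ, (t : ℝ) > Real.logb (1 - C) (ε / (B 0 i - B 0 j)) →
      B t i - B t j < ε := by
  obtain ⟨hC0, hC1⟩ := hC
  set D := B 0 i - B 0 j with hD
  have hDpos : 0 < D := sub_pos.mpr hij
  have hnpos : (0:ℝ) < n := by exact_mod_cast hn
  have hb0 : (0:ℝ) < 1 - C := by linarith
  have hb1 : 1 - C < 1 := by linarith
  have key : ∀ t, B t i - B t j = (1 - C) ^ t * D := by
    intro t
    induction t with
    | zero => simp [hD]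
    | succ t ih =>
      have hi := hupd t i
      have hj := hupd t j
      have hsum : ∀ m : Fin n, (∑ k, (B t k - B t m)) = (∑ k, B t k) - n * B t m := by
        intro m
        rw [Finset.sum_sub_distrib]
        simp [mul_comm]
      rw [hi, hj, hsum i, hsum j, pow_succ]
      have hn0 : (n:ℝ) ≠ 0 := ne_of_gt hnpos
      have hinv : (n:ℝ) * (n:ℝ)⁻¹ = 1 := mul_inv_cancel₀ hn0
      linear_combination (1 - C) * ih + C * (B t j - B t i) * hinv
  intro t ht
  rw [key t]
  have hlogb : Real.log (1 - C) < 0 := Real.log_neg hb0 hb1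
  -- from ht : t > log(ε/D)/log(1-C), get t * log(1-C) < log(ε/D)
  have h1 : (t : ℝ) * Real.log (1 - C) < Real.log (ε / D) := by
    rw [Real.logb, gt_iff_lt, div_lt_iff_of_neg hlogb] at ht
    linarith [ht]
  have h2 : (1 - C) ^ t = Real.exp ((t : ℝ) * Real.log (1 - C)) := by
    rw [← Real.log_pow, Real.exp_log (pow_pos hb0 t)]
  have h3 : Real.exp ((t:ℝ) * Real.log (1 - C)) < ε / D := by
    calc Real.exp ((t:ℝ) * Real.log (1 - C)) < Real.exp (Real.log (ε / D)) :=
          Real.exp_lt_exp.mpr h1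
      _ = ε / D := Real.exp_log (div_pos hε hDpos)
  rw [h2]
  calc Real.exp ((t:ℝ) * Real.log (1 - C)) * D < (ε / D) * D := by
        exact mul_lt_mul_of_pos_right h3 hDpos
    _ = ε := by field_simp
end

section
/- Under C-clique influence, if i is maximal and j minimal at time 0, then lim_{t→∞} (B_i^t − B_j^t) = 0. -/
theorem clique_extreme_difference_tendsto_zero (n : ℕ) (hn : 0 < n) (C : ℝ)
    (hC : C ∈ Set.Ioc (0:ℝ) 1)
    (B : ℕ → Fin n → ℝ) (hB : ∀ t i, B t i ∈ Set.Icc (0:ℝ) 1)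
    (hupd : ∀ t i, B (t+1) i = B t i + (C / n) * ∑ k, (B t k - B t i))
    (i j : Fin n) (hmax : ∀ k, B 0 k ≤ B 0 i) (hmin : ∀ k, B 0 j ≤ B 0 k) :
    Filter.Tendsto (fun t => B t i - B t j) Filter.atTop (nhds 0) := by
  have hn' : (n : ℝ) ≠ 0 := Nat.cast_ne_zero.mpr hn.ne'
  have key : ∀ t, B t i - B t j = (1 - C) ^ t * (B 0 i - B 0 j) := by
    intro t
    induction t with
    | zero => simp
    | succ t ih =>
      rw [hupd t i, hupd t j]
      have h1 : (∑ k, (B t k - B t i)) = (∑ k, B t k) - n * B t i := by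
        rw [Finset.sum_sub_distrib]; simp [Finset.card_univ, mul_comm]
      have h2 : (∑ k, (B t k - B t j)) = (∑ k, B t k) - n * B t j := by
        rw [Finset.sum_sub_distrib]; simp [Finset.card_univ, mul_comm]
      rw [h1, h2]
      have : B t i + C / ↑n * ((∑ k, B t k) - ↑n * B t i) -
          (B t j + C / ↑n * ((∑ k, B t k) - ↑n * B t j))
          = (1 - C) * (B t i - B t j) := by
        field_simp; ring
      rw [this, ih, pow_succ]; ring
  have hlim : Filter.Tendsto (fun t => (1 - C) ^ t * (B 0 i - B 0 j))
      Filter.atTop (nhds 0) := by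
    have : Filter.Tendsto (fun t : ℕ => (1 - C) ^ t) Filter.atTop (nhds 0) := by
      apply tendsto_pow_atTop_nhds_zero_of_abs_lt_one
      rw [abs_lt]; constructor <;> [linarith [hC.2]; linarith [hC.1]]
    simpa using this.mul_const (B 0 i - B 0 j)
  exact hlim.congr (fun t => (key t).symm)
end

section
/- Under C-clique influence, every agent's belief converges to the average of the initial beliefs: for every agent i, lim_{t→∞} B_i^t = (1/n) · Σ_{k ∈ A} B_k^0. -/
theorem clique_consensus_value (n : ℕ) (hn : 0 < n) (C : ℝ) (hC : C ∈ Set.Ioc (0:ℝ) 1)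
    (B : ℕ → Fin n → ℝ) (hB : ∀ t i, B t i ∈ Set.Icc (0:ℝ) 1)
    (hupd : ∀ t i, B (t+1) i = B t i + (C / n) * ∑ k, (B t k - B t i))
    (i : Fin n) :
    Filter.Tendsto (fun t => B t i) Filter.atTop
      (nhds ((1 / (n : ℝ)) * ∑ k, B 0 k)) := by
  obtain ⟨hC0, hC1⟩ := hC
  have hn' : (n : ℝ) ≠ 0 := Nat.cast_ne_zero.mpr hn.ne'
  set μ : ℝ := (1 / (n : ℝ)) * ∑ k, B 0 k with hμ
  -- sum invariance
  have hS : ∀ t, ∑ k, B t k = ∑ k, B 0 k := by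
    intro t
    induction t with
    | zero => rfl
    | succ t ih =>
      have : ∑ k, B (t+1) k = ∑ k, B t k := by
        have : ∀ j : Fin n, B (t+1) j
            = B t j + (C / n) * ((∑ k, B t k) - n * B t j) := by
          intro j
          rw [hupd t j, Finset.sum_sub_distrib, Finset.sum_const, Finset.card_univ,
            Fintype.card_fin, nsmul_eq_mul]
        rw [Finset.sum_congr rfl fun j _ => this j]
        rw [Finset.sum_add_distrib, ← Finset.mul_sum, Finset.sum_sub_distrib,
          Finset.sum_const, Finset.card_univ, Fintype.card_fin, nsmul_eq_mul,
          ← Finset.mul_sum]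
        ring
      rw [this, ih]
  -- closed form
  have hform : ∀ t, B t i - μ = (1 - C) ^ t * (B 0 i - μ) := by
    intro t
    induction t with
    | zero => simp
    | succ t ih =>
      have h1 : B (t+1) i = (1 - C) * B t i + C * μ := by
        rw [hupd t i, Finset.sum_sub_distrib, Finset.sum_const, Finset.card_univ,
          Fintype.card_fin, nsmul_eq_mul, hS t]
        field_simp [hμ]
        rw [hμ]; field_simp
        ring
      have : B (t+1) i - μ = (1 - C) * (B t i - μ) := by rw [h1]; ring
      rw [this, ih, pow_succ]; ring
  have habs : |1 - C| < 1 := by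
    rw [abs_lt]; constructor <;> linarith
  have hpow : Filter.Tendsto (fun t : ℕ => (1 - C) ^ t) Filter.atTop (nhds 0) :=
    tendsto_pow_atTop_nhds_zero_of_abs_lt_one habs
  have : Filter.Tendsto (fun t : ℕ => (1 - C) ^ t * (B 0 i - μ) + μ)
      Filter.atTop (nhds (0 * (B 0 i - μ) + μ)) :=
    Filter.Tendsto.add (hpow.mul tendsto_const_nhds) tendsto_const_nhds
  simp only [zero_mul, zero_add] at this
  convert this using 2 with t
  have := hform t
  linarith
end

section
/- Under the general update rule, for any agents i, k and any m ≥ 1, B_i^{t+m} ≤ max^t + (1/n) · I(k,i) · (B_k^{t+m−1} − max^t), where max^t = max_j B_j^t. -/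
theorem step_upper_bound (n : ℕ) (hn : 0 < n)
    (I : Fin n → Fin n → ℝ) (hI : ∀ i j, I i j ∈ Set.Icc (0:ℝ) 1)
    (B : ℕ → Fin n → ℝ) (hB : ∀ t i, B t i ∈ Set.Icc (0:ℝ) 1)
    (hupd : ∀ t i, B (t+1) i = B t i + (1 / n) * ∑ j, I j i * (B t j - B t i))
    (t m : ℕ) (hm : 1 ≤ m) (i k : Fin n) :
    B (t + m) i ≤ Finset.univ.sup' ⟨⟨0, hn⟩, Finset.mem_univ _⟩ (B t) +
      (1 / n) * I k i *
        (B (t + m - 1) k - Finset.univ.sup' ⟨⟨0, hn⟩, Finset.mem_univ _⟩ (B t)) := by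
  set M := Finset.univ.sup' ⟨⟨0, hn⟩, Finset.mem_univ _⟩ (B t) with hM
  have hnR : (0:ℝ) < n := Nat.cast_pos.mpr hn
  have hinv : (0:ℝ) ≤ 1 / n := by positivity
  -- all beliefs at time ≥ t are bounded by M
  have hmono : ∀ s j, B (t + s) j ≤ M := by
    intro s
    induction s with
    | zero => intro j; exact Finset.le_sup' (B t) (Finset.mem_univ j)
    | succ s ih =>
      intro j
      have hsum : ∑ l, I l j * (B (t+s) l - B (t+s) j) ≤ (n:ℝ) * (M - B (t+s) j) := by
        calc ∑ l, I l j * (B (t+s) l - B (t+s) j) ≤ ∑ _l : Fin n, (M - B (t+s) j) := by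
              apply Finset.sum_le_sum
              intro l _
              have h1 : I l j * (B (t+s) l - B (t+s) j) ≤ I l j * (M - B (t+s) j) :=
                mul_le_mul_of_nonneg_left (by linarith [ih l]) (hI l j).1
              have h2 : I l j * (M - B (t+s) j) ≤ 1 * (M - B (t+s) j) :=
                mul_le_mul_of_nonneg_right (hI l j).2 (by linarith [ih j])
              linarith
          _ = (n:ℝ) * (M - B (t+s) j) := by
              rw [Finset.sum_const, Finset.card_univ, Fintype.card_fin, nsmul_eq_mul]
      have hstep : B (t + (s+1)) j
          = B (t+s) j + (1/n) * ∑ l, I l j * (B (t+s) l - B (t+s) j) := hupd (t+s) j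
      have h4 : (1/n:ℝ) * ∑ l, I l j * (B (t+s) l - B (t+s) j)
          ≤ (1/n) * ((n:ℝ) * (M - B (t+s) j)) := mul_le_mul_of_nonneg_left hsum hinv
      have h5 : (1/n:ℝ) * ((n:ℝ) * (M - B (t+s) j)) = M - B (t+s) j := by
        field_simp
      rw [hstep]; linarith
  have hs : t + m - 1 = t + (m - 1) := by omega
  have hs1 : t + m = (t + m - 1) + 1 := by omega
  set s := t + m - 1 with hsdef
  have hBsj : ∀ j, B s j ≤ M := by intro j; rw [hs]; exact hmono (m-1) j
  rw [hs1, hupd]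
  -- split off the k term using a modified vector
  set f : Fin n → ℝ := fun j => if j = k then M else B s j with hf
  have hsplit : ∑ j, I j i * (B s j - B s i)
      = (∑ j, I j i * (f j - B s i)) + I k i * (B s k - M) := by
    have h1 : ∑ j, (I j i * (B s j - B s i) - I j i * (f j - B s i))
        = I k i * (B s k - M) := by
      rw [Finset.sum_eq_single k]
      · simp [hf]; ring
      · intro b _ hb; simp [hf, hb]
      · simp
    rw [Finset.sum_sub_distrib] at h1
    linarith
  have hfle : ∀ j, f j ≤ M := by
    intro j; by_cases h : j = k <;> simp [hf, h, hBsj j]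
  have hsum2 : ∑ j, I j i * (f j - B s i) ≤ (n:ℝ) * (M - B s i) := by
    calc ∑ j, I j i * (f j - B s i) ≤ ∑ _j : Fin n, (M - B s i) := by
          apply Finset.sum_le_sum
          intro l _
          have h1 : I l i * (f l - B s i) ≤ I l i * (M - B s i) :=
            mul_le_mul_of_nonneg_left (by linarith [hfle l]) (hI l i).1
          have h2 : I l i * (M - B s i) ≤ 1 * (M - B s i) :=
            mul_le_mul_of_nonneg_right (hI l i).2 (by linarith [hBsj i])
          linarith
      _ = (n:ℝ) * (M - B s i) := by
          rw [Finset.sum_const, Finset.card_univ, Fintype.card_fin, nsmul_eq_mul]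
  have h4 : (1/n:ℝ) * ∑ j, I j i * (f j - B s i) ≤ (1/n) * ((n:ℝ) * (M - B s i)) :=
    mul_le_mul_of_nonneg_left hsum2 hinv
  have h5 : (1/n:ℝ) * ((n:ℝ) * (M - B s i)) = M - B s i := by field_simp
  rw [hsplit]
  have : (1/n:ℝ) * ((∑ j, I j i * (f j - B s i)) + I k i * (B s k - M))
      = (1/n) * (∑ j, I j i * (f j - B s i)) + (1/n) * I k i * (B s k - M) := by ring
  rw [this]
  linarith
end

section
/- Under the general update rule, if there is an influence path p from agent i to agent j with product influence C (the product of the edge influence values along p), then B_j^{t+|p|} ≤ max^t + (C / n^{|p|}) · (B_i^t − max^t). -/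
/-- An influence path: a finite sequence of distinct agents, each having
strictly positive direct influence over the next. -/
def IsInfluencePath {n : ℕ} (I : Fin n → Fin n → ℝ) (l : List (Fin n)) : Prop :=
  l.Nodup ∧ l.Chain' (fun a b => 0 < I a b)

/-- The product influence along a path: the product of the direct influences
of consecutive agents. -/
def pathInfluence {n : ℕ} (I : Fin n → Fin n → ℝ) (l : List (Fin n)) : ℝ :=
  ((l.zip l.tail).map (fun p => I p.1 p.2)).prod

section Aux

variable {n : ℕ} (I : Fin n → Fin n → ℝ) (B : ℕ → Fin n → ℝ)

lemma pb_step (hI : ∀ i j, I i j ∈ Set.Icc (0:ℝ) 1)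
    (hupd : ∀ t i, B (t+1) i = B t i + (1 / n) * ∑ j, I j i * (B t j - B t i))
    (M : ℝ) (s : ℕ) (h : ∀ k, B s k ≤ M) (k : Fin n) : B (s+1) k ≤ M := by
  have hn : 0 < n := k.pos
  have hn0 : (0:ℝ) < n := by exact_mod_cast hn
  rw [hupd]
  have hsum : (∑ j, I j k * (B s j - B s k)) ≤ ∑ _j : Fin n, (M - B s k) := by
    apply Finset.sum_le_sum
    intro x _
    nlinarith [(hI x k).1, (hI x k).2, h x, h k]
  have : (∑ _j : Fin n, (M - B s k)) = n * (M - B s k) := by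
    simp [Finset.sum_const, Fintype.card_fin]; ring
  rw [this] at hsum
  have h1 : (1:ℝ)/n * (∑ j, I j k * (B s j - B s k)) ≤ (1/n) * (n * (M - B s k)) := by
    apply mul_le_mul_of_nonneg_left hsum (by positivity)
  have : (1:ℝ)/n * (n * (M - B s k)) = M - B s k := by field_simp
  linarith [this ▸ h1]

lemma pb_edge (hI : ∀ i j, I i j ∈ Set.Icc (0:ℝ) 1)
    (hupd : ∀ t i, B (t+1) i = B t i + (1 / n) * ∑ j, I j i * (B t j - B t i))
    (M : ℝ) (s : ℕ) (h : ∀ k, B s k ≤ M) (a b : Fin n) :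
    B (s+1) b ≤ M + (I a b / n) * (B s a - M) := by
  have hn : 0 < n := a.pos
  have hn0 : (0:ℝ) < n := by exact_mod_cast hn
  have hn1 : (1:ℝ) ≤ n := by exact_mod_cast hn
  rw [hupd]
  have hsplit : (∑ j, I j b * (B s j - B s b))
      = I a b * (B s a - B s b) + ∑ j ∈ Finset.univ.erase a, I j b * (B s j - B s b) := by
    exact (Finset.add_sum_erase _ _ (Finset.mem_univ a)).symm
  have hsum : (∑ j ∈ Finset.univ.erase a, I j b * (B s j - B s b))
      ≤ ∑ _j ∈ Finset.univ.erase a, (M - B s b) := by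
    apply Finset.sum_le_sum
    intro x _
    nlinarith [(hI x b).1, (hI x b).2, h x, h b]
  have hcard : ((Finset.univ.erase a).card : ℝ) = (n:ℝ) - 1 := by
    rw [Finset.card_erase_of_mem (Finset.mem_univ a)]
    simp [Finset.card_univ, Fintype.card_fin]
    rw [Nat.cast_sub hn]
    simp
  have hconst : (∑ _j ∈ Finset.univ.erase a, (M - B s b)) = ((n:ℝ) - 1) * (M - B s b) := by
    rw [Finset.sum_const, nsmul_eq_mul, hcard]
  rw [hconst] at hsum
  set T : ℝ := I a b * (B s a - B s b) + ((n:ℝ) - 1) * (M - B s b) with hT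
  have hST : (∑ j, I j b * (B s j - B s b)) ≤ T := by rw [hsplit]; linarith
  have h1 : B s b + (1:ℝ)/n * (∑ j, I j b * (B s j - B s b)) ≤ B s b + (1/n) * T := by
    have := mul_le_mul_of_nonneg_left hST (by positivity : (0:ℝ) ≤ 1/n)
    linarith
  have key : M + (I a b / n) * (B s a - M) - (B s b + (1/n) * T)
      = (M - B s b) * (1 - I a b) / n := by
    rw [hT]; field_simp; ring
  have hpos : (0:ℝ) ≤ (M - B s b) * (1 - I a b) / n := by
    apply div_nonneg _ (le_of_lt hn0)
    exact mul_nonneg (by linarith [h b]) (by linarith [(hI a b).2])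
  linarith

lemma pb_influence_nonneg (hI : ∀ i j, I i j ∈ Set.Icc (0:ℝ) 1) (l : List (Fin n)) :
    0 ≤ pathInfluence I l := by
  apply List.prod_nonneg
  intro x hx
  simp only [List.mem_map] at hx
  obtain ⟨p, _, rfl⟩ := hx
  exact (hI p.1 p.2).1

lemma pb_path (hI : ∀ i j, I i j ∈ Set.Icc (0:ℝ) 1)
    (hupd : ∀ t i, B (t+1) i = B t i + (1 / n) * ∑ j, I j i * (B t j - B t i))
    (M : ℝ) :
    ∀ (l : List (Fin n)), l.Chain' (fun a b => 0 < I a b) →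
    ∀ (s : ℕ), (∀ u k, B (s+u) k ≤ M) → ∀ a b, l.head? = some a → l.getLast? = some b →
    B (s + (l.length - 1)) b ≤ M + (pathInfluence I l / (n:ℝ)^(l.length - 1)) * (B s a - M)
  | [], _, s, hbd, a, b, hh, hl => by simp at hh
  | [a'], _, s, hbd, a, b, hh, hl => by
      simp at hh hl
      subst hh; subst hl
      simp [pathInfluence]
  | a' :: b' :: rest, hch, s, hbd, a, b, hh, hl => by
      have hn0 : (0:ℝ) < n := by exact_mod_cast a'.pos
      simp only [List.head?_cons, Option.some.injEq] at hh
      subst hh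
      rw [List.getLast?_cons_cons] at hl
      have hch' : (b' :: rest).Chain' (fun a b => 0 < I a b) := hch.tail
      have hbd' : ∀ u k, B (s + 1 + u) k ≤ M := by
        intro u k
        have := hbd (1 + u) k
        rwa [← add_assoc] at this
      have ih := pb_path hI hupd M (b' :: rest) hch' (s+1) hbd' b' b rfl hl
      set m := rest.length with hm
      have hlen1 : (b' :: rest).length - 1 = m := by simp [hm]
      have hlen2 : (a' :: b' :: rest).length - 1 = m + 1 := by simp [hm]
      rw [hlen1] at ih
      have hedge : B (s+1) b' ≤ M + (I a' b' / n) * (B s a' - M) :=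
        pb_edge I B hI hupd M s (fun k => by simpa using hbd 0 k) a' b'
      set P := pathInfluence I (b' :: rest) with hP
      have hPnn : 0 ≤ P / (n:ℝ)^m :=
        div_nonneg (pb_influence_nonneg I hI _) (by positivity)
      have hmul : (P/(n:ℝ)^m) * (B (s+1) b' - M) ≤ (P/(n:ℝ)^m) * ((I a' b' / n) * (B s a' - M)) :=
        mul_le_mul_of_nonneg_left (by linarith) hPnn
      have hfin : B (s+1+m) b ≤ M + (P/(n:ℝ)^m) * ((I a' b' / n) * (B s a' - M)) := by linarith
      rw [hlen2]
      have htime : s + (m+1) = s + 1 + m := by omega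
      rw [htime]
      have hPI : pathInfluence I (a' :: b' :: rest) = I a' b' * P := by
        simp [pathInfluence, hP]
      have heq : pathInfluence I (a' :: b' :: rest) / (n:ℝ)^(m+1) * (B s a' - M)
          = (P/(n:ℝ)^m) * ((I a' b' / n) * (B s a' - M)) := by
        rw [hPI, pow_succ]; field_simp
      rw [heq]
      exact hfin
end Aux


theorem path_bound (n : ℕ) (hn : 0 < n)
    (I : Fin n → Fin n → ℝ) (hI : ∀ i j, I i j ∈ Set.Icc (0:ℝ) 1)
    (B : ℕ → Fin n → ℝ) (hB : ∀ t i, B t i ∈ Set.Icc (0:ℝ) 1)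
    (hupd : ∀ t i, B (t+1) i = B t i + (1 / n) * ∑ j, I j i * (B t j - B t i))
    (t : ℕ) (i j : Fin n) (l : List (Fin n))
    (hpath : IsInfluencePath I l) (hlen : 2 ≤ l.length)
    (hhead : l.head? = some i) (hlast : l.getLast? = some j) :
    B (t + (l.length - 1)) j ≤
      Finset.univ.sup' ⟨⟨0, hn⟩, Finset.mem_univ _⟩ (B t) +
        (pathInfluence I l / (n : ℝ) ^ (l.length - 1)) *
          (B t i - Finset.univ.sup' ⟨⟨0, hn⟩, Finset.mem_univ _⟩ (B t)) := by
  set M := Finset.univ.sup' ⟨⟨0, hn⟩, Finset.mem_univ _⟩ (B t) with hM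
  have hbd : ∀ u k, B (t + u) k ≤ M := by
    intro u
    induction u with
    | zero => intro k; exact Finset.le_sup' (B t) (Finset.mem_univ k)
    | succ v ih => intro k; exact pb_step I B hI hupd M (t + v) ih k
  exact pb_path I B hI hupd M l hpath.2 t hbd i j hhead hlast
end

section
/- Under the general update rule, if B_i^{t+m} ≤ max^t − γ with γ ≥ 0, then B_i^{t+m+1} ≤ max^t − γ/n, where max^t = max_j B_j^t. -/
theorem gamma_bound (n : ℕ) (hn : 0 < n)
    (I : Fin n → Fin n → ℝ) (hI : ∀ i j, I i j ∈ Set.Icc (0:ℝ) 1)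
    (B : ℕ → Fin n → ℝ) (hB : ∀ t i, B t i ∈ Set.Icc (0:ℝ) 1)
    (hupd : ∀ t i, B (t+1) i = B t i + (1 / n) * ∑ j, I j i * (B t j - B t i))
    (t m : ℕ) (i : Fin n) (γ : ℝ) (hγ : 0 ≤ γ)
    (h : B (t + m) i ≤ Finset.univ.sup' ⟨⟨0, hn⟩, Finset.mem_univ _⟩ (B t) - γ) :
    B (t + m + 1) i ≤ Finset.univ.sup' ⟨⟨0, hn⟩, Finset.mem_univ _⟩ (B t) - γ / n := by
  set M := Finset.univ.sup' ⟨⟨0, hn⟩, Finset.mem_univ _⟩ (B t) with hM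
  have hn' : (0:ℝ) < n := by exact_mod_cast hn
  have h1n : (1/(n:ℝ)) * n = 1 := by field_simp
  -- all later beliefs are bounded by M
  have key : ∀ s j, B (t + s) j ≤ M := by
    intro s
    induction s with
    | zero => intro j; exact Finset.le_sup' (B t) (Finset.mem_univ j)
    | succ s ih =>
      intro j
      have hj := ih j
      show B (t + s + 1) j ≤ M
      rw [hupd]
      have hterm : ∀ k ∈ Finset.univ, I k j * (B (t+s) k - B (t+s) j)
          ≤ M - B (t+s) j := by
        intro k _
        have hk := ih k
        have hI1 := (hI k j).1
        have hI2 := (hI k j).2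
        nlinarith [mul_nonneg hI1 (sub_nonneg.2 hj)]
      have hsum := Finset.sum_le_card_nsmul Finset.univ _ _ hterm
      rw [Finset.card_univ, Fintype.card_fin, nsmul_eq_mul] at hsum
      have : (1/(n:ℝ)) * ∑ k, I k j * (B (t+s) k - B (t+s) j)
          ≤ (1/(n:ℝ)) * ((n:ℝ) * (M - B (t+s) j)) :=
        mul_le_mul_of_nonneg_left hsum (by positivity)
      have heq : (1/(n:ℝ)) * ((n:ℝ) * (M - B (t+s) j)) = M - B (t+s) j := by
        field_simp
      linarith [this, heq ▸ this]
  -- main step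
  have hMx : γ ≤ M - B (t+m) i := by linarith
  rw [hupd]
  have hzero : I i i * (B (t+m) i - B (t+m) i) = 0 := by ring
  rw [← Finset.sum_erase (f := fun k => I k i * (B (t+m) k - B (t+m) i)) Finset.univ hzero]
  have hterm : ∀ k ∈ Finset.univ.erase i, I k i * (B (t+m) k - B (t+m) i)
      ≤ M - B (t+m) i := by
    intro k _
    have hk := key m k
    have hI1 := (hI k i).1
    have hI2 := (hI k i).2
    nlinarith [mul_nonneg hI1 (sub_nonneg.2 (key m i))]
  have hsum := Finset.sum_le_card_nsmul _ _ _ hterm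
  rw [Finset.card_erase_of_mem (Finset.mem_univ i), Finset.card_univ,
    Fintype.card_fin, nsmul_eq_mul] at hsum
  have hcast : ((n - 1 : ℕ) : ℝ) = (n:ℝ) - 1 := by
    rw [Nat.cast_sub hn, Nat.cast_one]
  rw [hcast] at hsum
  have hmul : (1/(n:ℝ)) * ∑ k ∈ Finset.univ.erase i, I k i * (B (t+m) k - B (t+m) i)
      ≤ (1/(n:ℝ)) * (((n:ℝ) - 1) * (M - B (t+m) i)) :=
    mul_le_mul_of_nonneg_left hsum (by positivity)
  have hγn : γ / n = γ * (1/(n:ℝ)) := by ring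
  nlinarith [mul_le_mul_of_nonneg_right hMx (le_of_lt (one_div_pos.2 hn'))]
end

section
/- If the influence graph is strongly connected (for every pair of distinct agents i ≠ j there is an influence path from i to j), then lim_{t→∞} max^t = lim_{t→∞} min^t; i.e., the extreme beliefs converge to a common value. -/
lemma edge_bound {n : ℕ} (hn : 0 < n) (I : Fin n → Fin n → ℝ)
    (hI : ∀ i j, I i j ∈ Set.Icc (0:ℝ) 1) (b : Fin n → ℝ) (a : ℝ)
    (ha : ∀ k, a ≤ b k) (i j : Fin n) :
    a + (I j i / n) * (b j - a) ≤ b i + (1 / n) * ∑ k, I k i * (b k - b i) := by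
  have hn' : (0:ℝ) < n := by exact_mod_cast hn
  have h1 : ∑ k, I k i * (b k - b i)
      = (∑ k, I k i * (b k - a)) - (∑ k, I k i) * (b i - a) := by
    rw [Finset.sum_mul, ← Finset.sum_sub_distrib]
    exact Finset.sum_congr rfl fun k _ => by ring
  have h2 : I j i * (b j - a) ≤ ∑ k, I k i * (b k - a) :=
    Finset.single_le_sum (fun k _ => mul_nonneg (hI k i).1 (sub_nonneg.2 (ha k)))
      (Finset.mem_univ j)
  have h3 : (∑ k, I k i) * (b i - a) ≤ n * (b i - a) := by
    apply mul_le_mul_of_nonneg_right _ (sub_nonneg.2 (ha i))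
    calc (∑ k, I k i) ≤ ∑ _k : Fin n, (1:ℝ) := Finset.sum_le_sum fun k _ => (hI k i).2
    _ = n := by simp
  rw [h1]
  have h4 : (1/n : ℝ) * (I j i * (b j - a) - n * (b i - a))
      ≤ (1/n) * ((∑ k, I k i * (b k - a)) - (∑ k, I k i) * (b i - a)) := by
    apply mul_le_mul_of_nonneg_left (by linarith) (by positivity)
  have h5 : (1/n : ℝ) * (I j i * (b j - a) - n * (b i - a))
      = (I j i / n) * (b j - a) - (b i - a) := by
    field_simp
  linarith [h4, h5.symm.le]

lemma self_bound {n : ℕ} (hn : 0 < n) (I : Fin n → Fin n → ℝ)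
    (hI : ∀ i j, I i j ∈ Set.Icc (0:ℝ) 1) (b : Fin n → ℝ) (a : ℝ)
    (ha : ∀ k, a ≤ b k) (i : Fin n) :
    a + (1 / n) * (b i - a) ≤ b i + (1 / n) * ∑ k, I k i * (b k - b i) := by
  have hn' : (0:ℝ) < n := by exact_mod_cast hn
  have hterm : ∀ k : Fin n, (if k = i then 0 else -(b i - a)) ≤ I k i * (b k - b i) := by
    intro k
    by_cases hk : k = i
    · simp [hk]
    · simp only [if_neg hk]
      nlinarith [(hI k i).1, (hI k i).2, ha k, ha i]
  have hsum : -((n:ℝ) - 1) * (b i - a) ≤ ∑ k, I k i * (b k - b i) := by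
    calc -((n:ℝ) - 1) * (b i - a)
        = ∑ k : Fin n, (if k = i then 0 else -(b i - a)) := by
          rw [← Finset.add_sum_erase _ _ (Finset.mem_univ i)]
          rw [if_pos rfl, zero_add]
          rw [Finset.sum_ite_of_false (by intro k hk; exact Finset.ne_of_mem_erase hk)]
          rw [Finset.sum_const, Finset.card_erase_of_mem (Finset.mem_univ i)]
          simp only [Finset.card_univ, Fintype.card_fin]
          have h1n : 1 ≤ n := hn
          rw [nsmul_eq_mul, Nat.cast_sub h1n]
          push_cast
          ring
      _ ≤ _ := Finset.sum_le_sum fun k _ => hterm k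
  have h4 : (1/n : ℝ) * (-((n:ℝ) - 1) * (b i - a)) ≤ (1/n) * ∑ k, I k i * (b k - b i) :=
    mul_le_mul_of_nonneg_left hsum (by positivity)
  have h5 : (1/n : ℝ) * (-((n:ℝ) - 1) * (b i - a)) = -(b i - a) + (1/n) * (b i - a) := by
    field_simp; ring
  linarith

lemma max_bound {n : ℕ} (hn : 0 < n) (I : Fin n → Fin n → ℝ)
    (hI : ∀ i j, I i j ∈ Set.Icc (0:ℝ) 1) (b : Fin n → ℝ) (M : ℝ)
    (hM : ∀ k, b k ≤ M) (i : Fin n) :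
    b i + (1 / n) * ∑ k, I k i * (b k - b i) ≤ M := by
  have hn' : (0:ℝ) < n := by exact_mod_cast hn
  have hsum : ∑ k, I k i * (b k - b i) ≤ (n:ℝ) * (M - b i) := by
    calc ∑ k, I k i * (b k - b i) ≤ ∑ _k : Fin n, (M - b i) :=
          Finset.sum_le_sum fun k _ => by nlinarith [(hI k i).1, (hI k i).2, hM k, hM i]
    _ = (n:ℝ) * (M - b i) := by simp [Finset.sum_const, Fintype.card_fin]; ring
  have h4 : (1/n : ℝ) * ∑ k, I k i * (b k - b i) ≤ (1/n) * ((n:ℝ) * (M - b i)) :=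
    mul_le_mul_of_nonneg_left hsum (by positivity)
  have h5 : (1/n : ℝ) * ((n:ℝ) * (M - b i)) = M - b i := by field_simp
  linarith

/-- Strong connectivity: every agent has an influence path to every other agent. -/
def StronglyConnected {n : ℕ} (I : Fin n → Fin n → ℝ) : Prop :=
  ∀ i j : Fin n, i ≠ j → ∃ l : List (Fin n),
    IsInfluencePath I l ∧ l.head? = some i ∧ l.getLast? = some j

theorem extreme_consensus (n : ℕ) (hn : 0 < n)
    (I : Fin n → Fin n → ℝ) (hI : ∀ i j, I i j ∈ Set.Icc (0:ℝ) 1)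
    (hsc : StronglyConnected I)
    (B : ℕ → Fin n → ℝ) (hB : ∀ t i, B t i ∈ Set.Icc (0:ℝ) 1)
    (hupd : ∀ t i, B (t+1) i = B t i + (1 / n) * ∑ j, I j i * (B t j - B t i)) :
    ∃ c : ℝ,
      Filter.Tendsto (fun t => Finset.univ.sup' ⟨⟨0, hn⟩, Finset.mem_univ _⟩ (B t))
        Filter.atTop (nhds c) ∧
      Filter.Tendsto (fun t => Finset.univ.inf' ⟨⟨0, hn⟩, Finset.mem_univ _⟩ (B t))
        Filter.atTop (nhds c) := by
  classical
  have hn' : (0:ℝ) < n := by exact_mod_cast hn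
  set hne : (Finset.univ : Finset (Fin n)).Nonempty := ⟨⟨0, hn⟩, Finset.mem_univ _⟩ with hhne
  set M : ℕ → ℝ := fun t => Finset.univ.sup' hne (B t) with hM
  set m : ℕ → ℝ := fun t => Finset.univ.inf' hne (B t) with hm
  have hMk : ∀ t k, B t k ≤ M t := fun t k => Finset.le_sup' _ (Finset.mem_univ k)
  have hmk : ∀ t k, m t ≤ B t k := fun t k => Finset.inf'_le _ (Finset.mem_univ k)
  have hMstep : ∀ t, M (t+1) ≤ M t := by
    intro t
    apply Finset.sup'_le
    intro i _
    rw [hupd]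
    exact max_bound hn I hI (B t) (M t) (hMk t) i
  have hmstep : ∀ t, m t ≤ m (t+1) := by
    intro t
    apply Finset.le_inf'
    intro i _
    rw [hupd]
    have h := edge_bound hn I hI (B t) (m t) (hmk t) i i
    have h2 : 0 ≤ (I i i / n) * (B t i - m t) :=
      mul_nonneg (div_nonneg (hI i i).1 hn'.le) (sub_nonneg.2 (hmk t i))
    linarith
  have hManti : Antitone M := antitone_nat_of_succ_le hMstep
  have hmmono : Monotone m := monotone_nat_of_le_succ hmstep
  have hmM : ∀ t, m t ≤ M t := fun t => (hmk t ⟨0, hn⟩).trans (hMk t ⟨0, hn⟩)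
  -- minimal positive influence
  set P : Finset (Fin n × Fin n) := Finset.univ.filter (fun p => 0 < I p.1 p.2) with hPdef
  set ε : ℝ := if h : P.Nonempty then P.inf' h (fun p => I p.1 p.2) else 1 with hεdef
  have hε0 : 0 < ε := by
    rw [hεdef]
    split
    · next h =>
      rw [Finset.lt_inf'_iff]
      intro p hp
      exact (Finset.mem_filter.1 hp).2
    · exact one_pos
  have hε1 : ε ≤ 1 := by
    rw [hεdef]
    split
    · next h =>
      obtain ⟨p, hp⟩ := h
      exact (Finset.inf'_le _ hp).trans (hI p.1 p.2).2
    · exact le_refl 1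
  have hεle : ∀ p q : Fin n, 0 < I p q → ε ≤ I p q := by
    intro p q hpq
    have hmem : (p, q) ∈ P := Finset.mem_filter.2 ⟨Finset.mem_univ _, hpq⟩
    rw [hεdef, dif_pos ⟨(p, q), hmem⟩]
    exact Finset.inf'_le _ hmem
  set δ : ℝ := ε / n with hδdef
  have hδ0 : 0 < δ := div_pos hε0 hn'
  have hδn : δ ≤ 1 / n := by rw [hδdef]; gcongr
  have hδ1 : δ ≤ 1 := hδn.trans (by rw [div_le_one hn']; exact_mod_cast hn)
  have hmB : ∀ t t' k, t ≤ t' → m t ≤ B t' k := fun t t' k h => (hmmono h).trans (hmk t' k)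
  -- iterate the self-retention bound
  have hiter : ∀ (t₀ : ℕ) (c : ℝ), 0 ≤ c → ∀ (r t' : ℕ) (i : Fin n), t₀ ≤ t' →
      m t₀ + c ≤ B t' i → m t₀ + (1/(n:ℝ))^r * c ≤ B (t' + r) i := by
    intro t₀ c hc r
    induction r with
    | zero => intro t' i ht h; simpa using h
    | succ r ih =>
      intro t' i ht h
      have hIH := ih t' i ht h
      have e1 := self_bound hn I hI (B (t' + r)) (m t₀)
        (fun k => hmB t₀ (t' + r) k (ht.trans (Nat.le_add_right _ _))) i
      rw [← hupd] at e1
      have e2 : (1/(n:ℝ)) * ((1/(n:ℝ))^r * c) ≤ (1/(n:ℝ)) * (B (t' + r) i - m t₀) :=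
        mul_le_mul_of_nonneg_left (by linarith) (by positivity)
      have e3 : (1/(n:ℝ))^(r+1) * c = (1/(n:ℝ)) * ((1/(n:ℝ))^r * c) := by ring
      have : t' + (r + 1) = (t' + r) + 1 := by omega
      rw [this]
      linarith
  -- the main contraction
  have hcontr : ∀ t, M (t + n) - m (t + n) ≤ (1 - δ^n) * (M t - m t) := by
    intro t
    obtain ⟨istar, _, hstar⟩ := Finset.exists_mem_eq_sup' hne (B t)
    have hΔ0 : (0:ℝ) ≤ M t - m t := sub_nonneg.2 (hmM t)
    -- bound along a path
    have hpath : ∀ l : List (Fin n), l.Chain' (fun a b => 0 < I a b) →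
        l.head? = some istar → ∀ i, l.getLast? = some i →
        m t + δ^(l.length - 1) * (M t - m t) ≤ B (t + (l.length - 1)) i := by
      intro l
      induction l using List.reverseRecOn with
      | nil => intro _ hh; simp at hh
      | append_singleton l a ih =>
        intro hch hh i hlast
        rw [List.getLast?_concat] at hlast
        obtain rfl : a = i := by injection hlast
        rcases List.eq_nil_or_concat l with rfl | ⟨l', b, rfl⟩
        · simp only [List.nil_append, List.head?_cons] at hh
          obtain rfl : a = istar := by injection hh
          have hstar' : M t = B t a := hstar
          simp only [List.nil_append, List.length_singleton]
          norm_num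
          linarith [hstar'.ge]
        · simp only [List.concat_eq_append] at hch hh ih ⊢
          set l₀ : List (Fin n) := l' ++ [b] with hl₀
          have hl₀ne : l₀ ≠ [] := by simp [hl₀]
          rw [List.Chain', List.isChain_append] at hch
          obtain ⟨hch₀, _, hedge⟩ := hch
          have hhead : l₀.head? = some istar := by
            rw [← hh]
            rcases l' with _ | ⟨x, l''⟩ <;> simp [hl₀]
          have hlast₀ : l₀.getLast? = some b := List.getLast?_concat
          have hbi : 0 < I b a := hedge b (Option.mem_def.2 hlast₀) a (by simp)
          have hIH := ih hch₀ hhead b hlast₀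
          set s : ℕ := l₀.length - 1 with hs
          have hlen : l₀.length = s + 1 := by
            have h1 : 1 ≤ l₀.length := by
              rcases hl : l₀ with _ | _
              · exact absurd hl hl₀ne
              · simp
            omega
          have hlen2 : (l₀ ++ [a]).length - 1 = s + 1 := by simp [hlen]
          have e1 := edge_bound hn I hI (B (t + s)) (m t)
            (fun k => hmB t (t + s) k (Nat.le_add_right _ _)) a b
          rw [← hupd] at e1
          have hx : δ^s * (M t - m t) ≤ B (t + s) b - m t := by linarith
          have hx0 : (0:ℝ) ≤ δ^s * (M t - m t) := mul_nonneg (pow_nonneg hδ0.le _) hΔ0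
          have e2 : δ^(s+1) * (M t - m t) ≤ (I b a / n) * (B (t + s) b - m t) := by
            have heq : δ^(s+1) * (M t - m t) = δ * (δ^s * (M t - m t)) := by ring
            rw [heq]
            apply mul_le_mul _ hx hx0 (div_nonneg (hI b a).1 hn'.le)
            rw [hδdef]
            exact div_le_div_of_nonneg_right (hεle b a hbi) hn'.le
          rw [hlen2]
          have heq2 : t + (s + 1) = (t + s) + 1 := by omega
          rw [heq2]
          linarith
    -- every agent is close to the max after n more steps
    have hall : ∀ i, m t + δ^n * (M t - m t) ≤ B (t + n) i := by
      intro i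
      obtain ⟨l, hch, hh, hlast⟩ : ∃ l : List (Fin n), (l.Nodup ∧
          l.Chain' (fun a b => 0 < I a b)) ∧ l.head? = some istar ∧ l.getLast? = some i := by
        by_cases hii : i = istar
        · exact ⟨[istar], ⟨by simp, List.isChain_singleton _⟩, by simp, by simp [hii]⟩
        · exact hsc istar i (Ne.symm hii)
      have hlpos : 1 ≤ l.length := by
        rcases l with _ | _
        · simp at hh
        · simp
      have hlenle : l.length ≤ n := by
        have := hch.1.length_le_card
        simpa using this
      set s : ℕ := l.length - 1 with hs
      have hsn : s < n := by omega
      have h1 := hpath l hch.2 hh i hlast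
      rw [← hs] at h1
      have h2 := hiter t (δ^s * (M t - m t))
        (mul_nonneg (pow_nonneg hδ0.le _) (sub_nonneg.2 (hmM t))) (n - s) (t + s) i
        (Nat.le_add_right _ _) (by linarith)
      have h3 : t + s + (n - s) = t + n := by omega
      rw [h3] at h2
      have h4 : δ^n * (M t - m t) ≤ (1/(n:ℝ))^(n - s) * (δ^s * (M t - m t)) := by
        have e1 : δ^n = δ^(n-s) * δ^s := by rw [← pow_add]; congr 1; omega
        rw [e1, mul_assoc]
        apply mul_le_mul_of_nonneg_right _ (mul_nonneg (pow_nonneg hδ0.le _) (sub_nonneg.2 (hmM t)))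
        exact pow_le_pow_left₀ hδ0.le hδn _
      have h5 : (1/(n:ℝ))^(n-s) * (δ^s * (M t - m t)) = (1/(n:ℝ))^(n-s) * δ^s * (M t - m t) := by ring
      linarith
    have hminf : m t + δ^n * (M t - m t) ≤ m (t + n) :=
      Finset.le_inf' hne _ fun i _ => hall i
    have hMle : M (t + n) ≤ M t := hManti (Nat.le_add_right _ _)
    nlinarith
  set q : ℝ := 1 - δ^n with hqdef
  have hq0' : 0 ≤ q := by
    have := pow_le_one₀ hδ0.le hδ1 (n := n)
    rw [hqdef]; linarith
  have hq1' : q < 1 := by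
    have := pow_pos hδ0 n
    rw [hqdef]; linarith
  have hΔanti : ∀ a b : ℕ, a ≤ b → M b - m b ≤ M a - m a := fun a b h =>
    sub_le_sub (hManti h) (hmmono h)
  have hgeom : ∀ k, M (n*k) - m (n*k) ≤ q^k * (M 0 - m 0) := by
    intro k
    induction k with
    | zero => simp
    | succ k ih =>
      have h1 : n*(k+1) = n*k + n := by ring
      rw [h1]
      calc M (n*k+n) - m (n*k+n) ≤ q * (M (n*k) - m (n*k)) := hcontr (n*k)
      _ ≤ q * (q^k * (M 0 - m 0)) := mul_le_mul_of_nonneg_left ih hq0'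
      _ = q^(k+1) * (M 0 - m 0) := by ring
  have hdiv : Filter.Tendsto (fun t => t / n) Filter.atTop Filter.atTop :=
    Filter.tendsto_atTop_atTop.2 fun b => ⟨b*n, fun a ha => (Nat.le_div_iff_mul_le hn).2 ha⟩
  have hgz : Filter.Tendsto (fun t : ℕ => q^(t/n) * (M 0 - m 0)) Filter.atTop (nhds 0) := by
    have h := ((tendsto_pow_atTop_nhds_zero_of_lt_one hq0' hq1').comp hdiv).mul_const (M 0 - m 0)
    simpa using h
  have hΔtend : Filter.Tendsto (fun t => M t - m t) Filter.atTop (nhds 0) := by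
    apply squeeze_zero (fun t => sub_nonneg.2 (hmM t)) _ hgz
    intro t
    calc M t - m t ≤ M (n * (t/n)) - m (n * (t/n)) :=
          hΔanti _ _ (by rw [Nat.mul_comm]; exact Nat.div_mul_le_self t n)
    _ ≤ q^(t/n) * (M 0 - m 0) := hgeom _
  have hMbdd : BddBelow (Set.range M) := by
    refine ⟨0, ?_⟩
    rintro x ⟨t, rfl⟩
    exact le_trans (hB t ⟨0, hn⟩).1 (hMk t ⟨0, hn⟩)
  have hMtend : Filter.Tendsto M Filter.atTop (nhds (⨅ t, M t)) :=
    tendsto_atTop_ciInf hManti hMbdd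
  refine ⟨⨅ t, M t, hMtend, ?_⟩
  have hfinal := hMtend.sub hΔtend
  simpa using hfinal
end

section
/- If the influence graph is strongly connected, then all agents' beliefs converge to a common value: for all agents i, j, lim_{t→∞} B_i^t = lim_{t→∞} B_j^t. -/
/-- Propagation of a lower bound along a positive path of the coefficient matrix. -/
lemma path_prop {n : ℕ} (A : Fin n → Fin n → ℝ) (B : ℕ → Fin n → ℝ)
    (hstep : ∀ t i j v, (∀ k, v ≤ B t k) → A i j * (B t j - v) ≤ B (t+1) i - v) :
    ∀ (l : List (Fin n)) (a b : Fin n),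
      l.Chain' (fun x y => 0 < A y x) → l.head? = some a → l.getLast? = some b →
      ∃ c > 0, ∀ t v, (∀ s k, t ≤ s → v ≤ B s k) →
        c * (B t a - v) ≤ B (t + (l.length - 1)) b - v := by
  intro l
  induction l with
  | nil => intro a b _ h; simp at h
  | cons x l ih =>
    intro a b hchain hhead hlast
    simp only [List.head?_cons, Option.some.injEq] at hhead
    subst hhead
    match l, hchain, hlast with
    | [], _, hlast =>
      simp only [List.getLast?_singleton, Option.some.injEq] at hlast
      subst hlast
      exact ⟨1, one_pos, fun t v hv => by simp⟩
    | y :: l', hchain, hlast =>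
      rw [List.getLast?_cons_cons] at hlast
      simp only [List.Chain', List.isChain_cons_cons] at hchain
      obtain ⟨hxy, hchain'⟩ := hchain
      obtain ⟨c, hc, hcb⟩ := ih y b hchain' rfl hlast
      refine ⟨c * A y x, mul_pos hc hxy, fun t v hv => ?_⟩
      have h1 : A y x * (B t x - v) ≤ B (t+1) y - v :=
        hstep t y x v (fun k => hv t k le_rfl)
      have h2 : c * (B (t+1) y - v) ≤ B ((t+1) + ((y :: l').length - 1)) b - v :=
        hcb (t+1) v (fun s k hs => hv s k (by omega))
      have h3 : c * (A y x * (B t x - v)) ≤ c * (B (t+1) y - v) :=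
        mul_le_mul_of_nonneg_left h1 hc.le
      have harith : (t+1) + ((y :: l').length - 1) = t + ((x :: y :: l').length - 1) := by
        simp [List.length_cons]; omega
      rw [harith] at h2
      calc c * A y x * (B t x - v) = c * (A y x * (B t x - v)) := by ring
        _ ≤ c * (B (t+1) y - v) := h3
        _ ≤ _ := h2

theorem belief_consensus (n : ℕ) (hn : 0 < n)
    (I : Fin n → Fin n → ℝ) (hI : ∀ i j, I i j ∈ Set.Icc (0:ℝ) 1)
    (hsc : StronglyConnected I)
    (B : ℕ → Fin n → ℝ) (hB : ∀ t i, B t i ∈ Set.Icc (0:ℝ) 1)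
    (hupd : ∀ t i, B (t+1) i = B t i + (1 / n) * ∑ j, I j i * (B t j - B t i)) :
    ∃ c : ℝ, ∀ i : Fin n,
      Filter.Tendsto (fun t => B t i) Filter.atTop (nhds c) := by
  have hn' : (0:ℝ) < n := by exact_mod_cast hn
  set A : Fin n → Fin n → ℝ :=
    fun i j => (1/n) * I j i + (if i = j then 1 - (1/n) * ∑ k, I k i else 0) with hA
  have hrow : ∀ i, ∑ j, A i j = 1 := by
    intro i
    rw [hA]
    rw [Finset.sum_add_distrib, Finset.sum_ite_eq]
    simp only [Finset.mem_univ, if_true, ← Finset.mul_sum]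
    ring
  have hmat : ∀ t i, B (t+1) i = ∑ j, A i j * B t j := by
    intro t i
    have e1 : ∑ j, I j i * (B t j - B t i)
        = (∑ j, I j i * B t j) - (∑ j, I j i) * B t i := by
      rw [Finset.sum_mul, ← Finset.sum_sub_distrib]
      exact Finset.sum_congr rfl fun j _ => by ring
    have e2 : ∑ j, A i j * B t j
        = (∑ j, (1/(n:ℝ)) * I j i * B t j) + (1 - (1/(n:ℝ)) * ∑ k, I k i) * B t i := by
      rw [hA]
      simp only [add_mul, ite_mul, zero_mul, Finset.sum_add_distrib, Finset.sum_ite_eq,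
        Finset.mem_univ, if_true]
    have e3 : ∑ j, (1/(n:ℝ)) * I j i * B t j = (1/(n:ℝ)) * ∑ j, I j i * B t j := by
      rw [Finset.mul_sum]
      exact Finset.sum_congr rfl fun j _ => by ring
    rw [hupd, e1, e2, e3]
    ring
  -- diagonal entries are at least 1/n
  have hAdiag : ∀ i, 1/(n:ℝ) ≤ A i i := by
    intro i
    have hsplit : ∑ k, I k i = I i i + ∑ k ∈ Finset.univ.erase i, I k i := by
      rw [← Finset.add_sum_erase _ _ (Finset.mem_univ i)]
    have hbd : ∑ k ∈ Finset.univ.erase i, I k i ≤ (n:ℝ) - 1 := by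
      calc ∑ k ∈ Finset.univ.erase i, I k i ≤ ∑ _k ∈ Finset.univ.erase i, (1:ℝ) :=
            Finset.sum_le_sum fun k _ => (hI k i).2
        _ = ((Finset.univ.erase i).card : ℝ) := by simp
        _ = (n:ℝ) - 1 := by
            rw [Finset.card_erase_of_mem (Finset.mem_univ i)]
            simp [Finset.card_univ]
            rw [Nat.cast_sub hn]
            simp
    have : A i i = 1 - (1/(n:ℝ)) * ∑ k ∈ Finset.univ.erase i, I k i := by
      rw [hA]; simp only [eq_self_iff_true, if_true]; rw [hsplit]; ring
    rw [this]
    have h1n : 0 < 1/(n:ℝ) := by positivity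
    have := mul_le_mul_of_nonneg_left hbd h1n.le
    have hh : (1/(n:ℝ)) * ((n:ℝ) - 1) = 1 - 1/(n:ℝ) := by field_simp
    rw [hh] at this
    linarith
  have hAlow : ∀ i j, (1/(n:ℝ)) * I j i ≤ A i j := by
    intro i j
    by_cases h : i = j
    · subst h
      have h1 : (1/(n:ℝ)) * I i i ≤ (1/(n:ℝ)) * 1 :=
        mul_le_mul_of_nonneg_left (hI i i).2 (by positivity)
      calc (1/(n:ℝ)) * I i i ≤ 1/(n:ℝ) := by linarith
        _ ≤ A i i := hAdiag i
    · rw [hA]; simp [h]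
  have hAnn : ∀ i j, 0 ≤ A i j := fun i j =>
    le_trans (mul_nonneg (by positivity) (hI j i).1) (hAlow i j)
  -- key one-step lower bound
  have hstep : ∀ t i j v, (∀ k, v ≤ B t k) → A i j * (B t j - v) ≤ B (t+1) i - v := by
    intro t i j v hv
    have he : B (t+1) i - v = ∑ k, A i k * (B t k - v) := by
      simp only [mul_sub, Finset.sum_sub_distrib, ← Finset.sum_mul, hrow, hmat]
      ring
    rw [he]
    exact Finset.single_le_sum
      (f := fun k => A i k * (B t k - v))
      (fun k _ => mul_nonneg (hAnn i k) (by linarith [hv k])) (Finset.mem_univ j)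
  have hne : (Finset.univ : Finset (Fin n)).Nonempty := ⟨⟨0, hn⟩, Finset.mem_univ _⟩
  set Mx : ℕ → ℝ := fun t => Finset.univ.sup' hne (B t) with hMx
  set Lo : ℕ → ℝ := fun t => Finset.univ.inf' hne (B t) with hLo
  have hLB : ∀ t i, Lo t ≤ B t i := fun t i => Finset.inf'_le _ (Finset.mem_univ i)
  have hUB : ∀ t i, B t i ≤ Mx t := fun t i => Finset.le_sup' _ (Finset.mem_univ i)
  have hupper : ∀ t i, B (t+1) i ≤ Mx t := by
    intro t i
    rw [hmat]
    calc ∑ k, A i k * B t k ≤ ∑ k, A i k * Mx t :=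
          Finset.sum_le_sum fun k _ => mul_le_mul_of_nonneg_left (hUB t k) (hAnn i k)
      _ = (∑ k, A i k) * Mx t := by rw [Finset.sum_mul]
      _ = Mx t := by rw [hrow]; ring
  have hlower : ∀ t i, Lo t ≤ B (t+1) i := by
    intro t i
    rw [hmat]
    calc Lo t = (∑ k, A i k) * Lo t := by rw [hrow]; ring
      _ = ∑ k, A i k * Lo t := by rw [Finset.sum_mul]
      _ ≤ ∑ k, A i k * B t k :=
          Finset.sum_le_sum fun k _ => mul_le_mul_of_nonneg_left (hLB t k) (hAnn i k)
  have hMono : Monotone Lo :=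
    monotone_nat_of_le_succ fun t => Finset.le_inf' hne _ fun i _ => hlower t i
  have hManti : Antitone Mx :=
    antitone_nat_of_succ_le fun t => Finset.sup'_le hne _ fun i _ => hupper t i
  have hvLo : ∀ t s k, t ≤ s → Lo t ≤ B s k := fun t s k hts =>
    le_trans (hMono hts) (hLB s k)
  -- iterated diagonal padding
  have pad : ∀ (m t : ℕ) (i : Fin n) (v : ℝ), (∀ s k, t ≤ s → v ≤ B s k) →
      (1/(n:ℝ))^m * (B t i - v) ≤ B (t+m) i - v := by
    intro m
    induction m with
    | zero => intro t i v hv; simp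
    | succ m ihm =>
      intro t i v hv
      have h1 := ihm t i v hv
      have h2 : A i i * (B (t+m) i - v) ≤ B (t+m+1) i - v :=
        hstep (t+m) i i v (fun k => hv _ k (by omega))
      have h3 : (1/(n:ℝ)) * (B (t+m) i - v) ≤ A i i * (B (t+m) i - v) := by
        have hnn : 0 ≤ B (t+m) i - v := by linarith [hv (t+m) i (by omega)]
        exact mul_le_mul_of_nonneg_right (hAdiag i) hnn
      have h4 : (1/(n:ℝ)) * ((1/(n:ℝ))^m * (B t i - v)) ≤ (1/(n:ℝ)) * (B (t+m) i - v) :=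
        mul_le_mul_of_nonneg_left h1 (by positivity)
      calc (1/(n:ℝ))^(m+1) * (B t i - v)
          = (1/(n:ℝ)) * ((1/(n:ℝ))^m * (B t i - v)) := by ring
        _ ≤ (1/(n:ℝ)) * (B (t+m) i - v) := h4
        _ ≤ A i i * (B (t+m) i - v) := h3
        _ ≤ B (t+m+1) i - v := h2
  -- the pairwise influence bound after n steps
  have pair : ∀ i j : Fin n, ∃ c > 0, ∀ t v, (∀ s k, t ≤ s → v ≤ B s k) →
      c * (B t j - v) ≤ B (t+n) i - v := by
    intro i j
    by_cases hij : j = i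
    · subst hij
      exact ⟨(1/(n:ℝ))^n, by positivity, fun t v hv => pad n t j v hv⟩
    · obtain ⟨l, ⟨hnd, hch⟩, hhead, hlast⟩ := hsc j i hij
      have hchA : l.Chain' (fun x y => 0 < A y x) :=
        List.IsChain.imp (fun a b h =>
          lt_of_lt_of_le (mul_pos (by positivity) h) (hAlow b a)) hch
      obtain ⟨c, hc, hcb⟩ := path_prop A B hstep l j i hchA hhead hlast
      have hr : l.length - 1 ≤ n := by
        have := hnd.length_le_card
        simp [Fintype.card_fin] at this
        omega
      refine ⟨(1/(n:ℝ))^(n - (l.length - 1)) * c, by positivity, fun t v hv => ?_⟩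
      have h1 := hcb t v hv
      have h2 := pad (n - (l.length - 1)) (t + (l.length - 1)) i v
        (fun s k hs => hv s k (by omega))
      have he : t + (l.length - 1) + (n - (l.length - 1)) = t + n := by omega
      rw [he] at h2
      calc (1/(n:ℝ))^(n - (l.length - 1)) * c * (B t j - v)
          = (1/(n:ℝ))^(n - (l.length - 1)) * (c * (B t j - v)) := by ring
        _ ≤ (1/(n:ℝ))^(n - (l.length - 1)) * (B (t + (l.length - 1)) i - v) :=
            mul_le_mul_of_nonneg_left h1 (by positivity)
        _ ≤ _ := h2
  choose c0 hc0 hbound using pair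
  have hne2 : (Finset.univ : Finset (Fin n × Fin n)).Nonempty :=
    ⟨(⟨0, hn⟩, ⟨0, hn⟩), Finset.mem_univ _⟩
  set δ : ℝ := min (Finset.univ.inf' hne2 (fun p : Fin n × Fin n => c0 p.1 p.2)) (1/2) with hδ
  have hδpos : 0 < δ := by
    apply lt_min _ (by norm_num)
    rw [Finset.lt_inf'_iff]
    exact fun p _ => hc0 p.1 p.2
  have hδle : ∀ i j, δ ≤ c0 i j := fun i j =>
    le_trans (min_le_left _ _) (Finset.inf'_le _ (Finset.mem_univ (i, j)))
  have hδhalf : δ ≤ 1/2 := min_le_right _ _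
  set g : ℕ → ℝ := fun t => Mx t - Lo t with hg
  have hg0 : ∀ t, 0 ≤ g t := fun t => by
    have := le_trans (hLB t ⟨0, hn⟩) (hUB t ⟨0, hn⟩)
    simp only [hg]; linarith
  have hganti : Antitone g := fun a b hab => by
    simp only [hg]
    have := hManti hab
    have := hMono hab
    linarith
  have hcontr : ∀ t, g (t+n) ≤ (1-δ) * g t := by
    intro t
    obtain ⟨j0, _, hj0⟩ := Finset.exists_mem_eq_sup' hne (B t)
    have hv : ∀ s k, t ≤ s → Lo t ≤ B s k := fun s k hs => hvLo t s k hs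
    have hlo : ∀ i, Lo t + δ * g t ≤ B (t+n) i := by
      intro i
      have h := hbound i j0 t (Lo t) hv
      have h2 : δ * g t ≤ c0 i j0 * (B t j0 - Lo t) := by
        have hgt : g t = B t j0 - Lo t := by simp only [hg, hMx]; rw [hj0]
        rw [hgt]
        exact mul_le_mul_of_nonneg_right (hδle i j0) (by rw [← hgt]; exact hg0 t)
      linarith
    have h1 : Lo t + δ * g t ≤ Lo (t+n) := Finset.le_inf' hne _ fun i _ => hlo i
    have h2 : Mx (t+n) ≤ Mx t := hManti (by omega)
    simp only [hg] at *
    linarith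
  have hgeo : ∀ k, g (n * k) ≤ (1-δ)^k * g 0 := by
    intro k
    induction k with
    | zero => simp
    | succ k ihk =>
      have he : n * (k+1) = n * k + n := by ring
      rw [he]
      calc g (n * k + n) ≤ (1-δ) * g (n * k) := hcontr (n * k)
        _ ≤ (1-δ) * ((1-δ)^k * g 0) :=
            mul_le_mul_of_nonneg_left ihk (by linarith)
        _ = (1-δ)^(k+1) * g 0 := by ring
  have hgall : ∀ t, g t ≤ (1-δ)^(t/n) * g 0 := by
    intro t
    have h1 : n * (t / n) ≤ t := by rw [mul_comm]; exact Nat.div_mul_le_self t n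
    exact le_trans (hganti h1) (hgeo (t / n))
  have hgtend : Filter.Tendsto g Filter.atTop (nhds 0) := by
    have hq : Filter.Tendsto (fun t : ℕ => t / n) Filter.atTop Filter.atTop :=
      Filter.tendsto_atTop_atTop.2 fun b => ⟨b * n, fun t ht => (Nat.le_div_iff_mul_le hn).2 ht⟩
    have hpow := tendsto_pow_atTop_nhds_zero_of_lt_one
      (by linarith : (0:ℝ) ≤ 1 - δ) (by linarith : (1:ℝ) - δ < 1)
    have hcomp := (hpow.mul_const (g 0)).comp hq
    simp only [Function.comp, zero_mul] at hcomp
    exact tendsto_of_tendsto_of_tendsto_of_le_of_le tendsto_const_nhds hcomp hg0 hgall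
  have hbdd : BddAbove (Set.range Lo) := by
    refine ⟨1, fun x hx => ?_⟩
    obtain ⟨t, rfl⟩ := hx
    exact le_trans (hLB t ⟨0, hn⟩) (hB t ⟨0, hn⟩).2
  have hLtend : Filter.Tendsto Lo Filter.atTop (nhds (⨆ t, Lo t)) :=
    tendsto_atTop_ciSup hMono hbdd
  refine ⟨⨆ t, Lo t, fun i => ?_⟩
  have hup : Filter.Tendsto (fun t => Lo t + g t) Filter.atTop (nhds (⨆ t, Lo t)) := by
    have := hLtend.add hgtend
    simpa using this
  exact tendsto_of_tendsto_of_tendsto_of_le_of_le hLtend hup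
    (fun t => hLB t i) (fun t => by have := hUB t i; simp only [hg]; linarith)
end

section
/- If the influence graph I is balanced and I(i,j) > 0 for some agents i, j, then there exists an influence path from j back to i. Consequently, a balanced influence graph that is weakly connected is strongly connected. -/
/-- Weak connectivity: the undirected graph with an edge between `i` and `j`
whenever `I i j > 0` or `I j i > 0` is connected. -/
def WeaklyConnected {n : ℕ} (I : Fin n → Fin n → ℝ) : Prop :=
  ∀ i j : Fin n, Relation.ReflTransGen (fun a b => 0 < I a b ∨ 0 < I b a) i j

lemma exists_nodup_path {α : Type*} (r : α → α → Prop) {j i : α}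
    (h : Relation.ReflTransGen r j i) :
    ∃ l : List α, l.Nodup ∧ l.Chain' r ∧ l.head? = some j ∧ l.getLast? = some i := by
  induction h using Relation.ReflTransGen.head_induction_on with
  | refl => exact ⟨[i], by simp, List.isChain_singleton _, rfl, rfl⟩
  | head hac _ ih =>
    rename_i a c _
    obtain ⟨l, hnd, hch, hhd, hlast⟩ := ih
    by_cases ha : a ∈ l
    · obtain ⟨s, t, rfl⟩ := List.append_of_mem ha
      refine ⟨a :: t, ?_, ?_, rfl, ?_⟩
      · exact hnd.sublist (List.sublist_append_right s (a :: t))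
      · exact hch.suffix ⟨s, rfl⟩
      · rwa [List.getLast?_append_of_ne_nil _ (by simp)] at hlast
    · refine ⟨a :: l, List.nodup_cons.2 ⟨ha, hnd⟩, ?_, rfl, ?_⟩
      · refine List.isChain_cons.2 ⟨fun y hy => ?_, hch⟩
        rw [hhd] at hy; cases hy; exact hac
      · have hne : l ≠ [] := by
          intro h'; rw [h'] at hhd; simp at hhd
        rw [show a :: l = [a] ++ l from rfl,
          List.getLast?_append_of_ne_nil _ hne]
        exact hlast

theorem balanced_weakly_connected (n : ℕ) (hn : 0 < n)
    (I : Fin n → Fin n → ℝ) (hI : ∀ i j, I i j ∈ Set.Icc (0:ℝ) 1)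
    (hbal : ∀ i : Fin n, ∑ j, I i j = ∑ j, I j i) :
    (∀ i j : Fin n, 0 < I i j → ∃ l : List (Fin n),
        IsInfluencePath I l ∧ l.head? = some j ∧ l.getLast? = some i) ∧
    (WeaklyConnected I → StronglyConnected I) := by
  set r : Fin n → Fin n → Prop := fun a b => 0 < I a b with hr
  -- key: any positive edge can be reversed by reachability
  have key : ∀ i j : Fin n, 0 < I i j → Relation.ReflTransGen r j i := by
    intro i j hij
    classical
    set S : Finset (Fin n) := Finset.univ.filter (fun x => Relation.ReflTransGen r j x) with hS
    have hjS : j ∈ S := by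
      simp only [hS, Finset.mem_filter, Finset.mem_univ, true_and]
      exact Relation.ReflTransGen.refl
    have hclosed : ∀ a ∈ S, ∀ b ∉ S, I a b = 0 := by
      intro a ha b hb
      by_contra h
      have hpos : 0 < I a b := lt_of_le_of_ne (hI a b).1 (Ne.symm h)
      have : b ∈ S := by
        simp only [hS, Finset.mem_filter, Finset.mem_univ, true_and] at ha ⊢
        exact ha.tail hpos
      exact hb this
    -- flow balance over the cut
    have hcut : ∑ a ∈ S, ∑ b ∈ Sᶜ, I a b = ∑ a ∈ S, ∑ b ∈ Sᶜ, I b a := by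
      have h1 : ∀ a ∈ S, ∑ b, I a b = ∑ b ∈ S, I a b + ∑ b ∈ Sᶜ, I a b := by
        intro a _; rw [Finset.sum_add_sum_compl]
      have h2 : ∀ a ∈ S, ∑ b, I b a = ∑ b ∈ S, I b a + ∑ b ∈ Sᶜ, I b a := by
        intro a _; rw [Finset.sum_add_sum_compl]
      have hb2 : ∑ a ∈ S, ∑ b, I a b = ∑ a ∈ S, ∑ b, I b a :=
        Finset.sum_congr rfl (fun a _ => hbal a)
      rw [Finset.sum_congr rfl h1, Finset.sum_congr rfl h2, Finset.sum_add_distrib,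
        Finset.sum_add_distrib, Finset.sum_comm (s := S) (t := S) (f := fun a b => I a b)]
        at hb2
      linarith
    have hLHS : ∑ a ∈ S, ∑ b ∈ Sᶜ, I a b = 0 :=
      Finset.sum_eq_zero fun a ha => Finset.sum_eq_zero fun b hb =>
        hclosed a ha b (Finset.mem_compl.1 hb)
    have hzero : ∀ a ∈ S, ∀ b ∈ Sᶜ, I b a = 0 := by
      have h0 : ∑ a ∈ S, ∑ b ∈ Sᶜ, I b a = 0 := by rw [← hcut, hLHS]
      have := (Finset.sum_eq_zero_iff_of_nonneg
        (fun a _ => Finset.sum_nonneg fun b _ => (hI b a).1)).1 h0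
      intro a ha b hb
      exact (Finset.sum_eq_zero_iff_of_nonneg (fun b _ => (hI b a).1)).1 (this a ha) b hb
    by_cases hiS : i ∈ S
    · simpa [hS] using hiS
    · exact absurd (hzero j hjS i (Finset.mem_compl.2 hiS)) (ne_of_gt hij)
  have part1 : ∀ i j : Fin n, 0 < I i j → ∃ l : List (Fin n),
      IsInfluencePath I l ∧ l.head? = some j ∧ l.getLast? = some i := by
    intro i j hij
    obtain ⟨l, hnd, hch, hhd, hlast⟩ := exists_nodup_path r (key i j hij)
    exact ⟨l, ⟨hnd, hch⟩, hhd, hlast⟩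
  refine ⟨part1, ?_⟩
  intro hwc i j hij
  have hrtg : Relation.ReflTransGen r i j := by
    have h := hwc i j
    clear hij
    induction h with
    | refl => exact Relation.ReflTransGen.refl
    | tail _ hbc ih =>
      rcases hbc with h | h
      · exact ih.tail h
      · exact ih.trans (key _ _ h)
  obtain ⟨l, hnd, hch, hhd, hlast⟩ := exists_nodup_path r hrtg
  exact ⟨l, ⟨hnd, hch⟩, hhd, hlast⟩
end

section
/- If the influence graph is balanced and weakly connected, then every agent's belief converges to the average of the initial beliefs: lim_{t→∞} B_i^t = (1/n) · Σ_j B_j^0 for every agent i. -/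
open Finset

section Aux

variable {n : ℕ}

/-- Reverse edges are realized by directed paths, in a balanced graph. -/
lemma aux_rev_edge (I : Fin n → Fin n → ℝ)
    (hI : ∀ i j, I i j ∈ Set.Icc (0:ℝ) 1)
    (hbal : ∀ i : Fin n, ∑ j, I i j = ∑ j, I j i)
    (a b : Fin n) (hba : 0 < I b a) :
    Relation.ReflTransGen (fun x y => 0 < I x y) a b := by
  classical
  set S : Finset (Fin n) := univ.filter (fun x => Relation.ReflTransGen (fun x y => 0 < I x y) a x) with hS
  have haS : a ∈ S := by
    simp only [hS, mem_filter, mem_univ, true_and]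
    exact Relation.ReflTransGen.refl
  have hclosed : ∀ x ∈ S, ∀ y, 0 < I x y → y ∈ S := by
    intro x hx y hxy
    simp only [hS, mem_filter, mem_univ, true_and] at hx ⊢
    exact hx.tail hxy
  by_contra hb
  have hbS : b ∉ S := by simpa [hS] using hb
  have hout : ∀ x ∈ S, ∀ y ∈ Sᶜ, I x y = 0 := by
    intro x hx y hy
    rcases eq_or_lt_of_le (hI x y).1 with h | h
    · exact h.symm
    · exact absurd (hclosed x hx y h) (by simpa using hy)
  have hsum : ∑ x ∈ S, ∑ j, I x j = ∑ x ∈ S, ∑ j, I j x :=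
    Finset.sum_congr rfl (fun x _ => hbal x)
  have hsplit1 : ∀ x, ∑ j, I x j = ∑ j ∈ S, I x j + ∑ j ∈ Sᶜ, I x j := by
    intro x; rw [Finset.sum_add_sum_compl]
  have hsplit2 : ∀ x, ∑ j, I j x = ∑ j ∈ S, I j x + ∑ j ∈ Sᶜ, I j x := by
    intro x; rw [Finset.sum_add_sum_compl]
  rw [Finset.sum_congr rfl (fun x _ => hsplit1 x),
      Finset.sum_congr rfl (fun x _ => hsplit2 x),
      Finset.sum_add_distrib, Finset.sum_add_distrib,
      Finset.sum_comm (s := S) (t := S)] at hsum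
  have hcancel : ∑ x ∈ S, ∑ j ∈ Sᶜ, I x j = ∑ x ∈ S, ∑ j ∈ Sᶜ, I j x := by
    linarith [hsum]
  have hzero : ∑ x ∈ S, ∑ j ∈ Sᶜ, I x j = 0 :=
    Finset.sum_eq_zero (fun x hx => Finset.sum_eq_zero (fun y hy => hout x hx y hy))
  have hpos : 0 < ∑ x ∈ S, ∑ j ∈ Sᶜ, I j x := by
    have h1 : 0 < ∑ j ∈ Sᶜ, I j a := by
      have hbc : b ∈ Sᶜ := Finset.mem_compl.2 hbS
      have := Finset.single_le_sum (f := fun j => I j a)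
        (fun j _ => (hI j a).1) hbc
      linarith
    have h2 : ∀ x ∈ S, (0:ℝ) ≤ ∑ j ∈ Sᶜ, I j x :=
      fun x _ => Finset.sum_nonneg (fun j _ => (hI j x).1)
    calc (0:ℝ) < ∑ j ∈ Sᶜ, I j a := h1
      _ ≤ ∑ x ∈ S, ∑ j ∈ Sᶜ, I j x := Finset.single_le_sum h2 haS
  rw [hzero] at hcancel
  linarith

/-- Balanced + weakly connected implies strongly connected. -/
lemma aux_strong_conn (I : Fin n → Fin n → ℝ)
    (hI : ∀ i j, I i j ∈ Set.Icc (0:ℝ) 1)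
    (hbal : ∀ i : Fin n, ∑ j, I i j = ∑ j, I j i)
    (hwc : WeaklyConnected I) :
    ∀ a b : Fin n, Relation.ReflTransGen (fun x y => 0 < I x y) a b := by
  intro a b
  induction hwc a b with
  | refl => exact Relation.ReflTransGen.refl
  | tail _ h ih =>
    rename_i x y _
    rcases h with h | h
    · exact ih.tail h
    · exact ih.trans (aux_rev_edge I hI hbal x y h)

variable (hn : 0 < n) (I : Fin n → Fin n → ℝ)
  (B : ℕ → Fin n → ℝ)

/-- The update rule, rewritten as a convex combination. -/
lemma aux_step_eq
    (hupd : ∀ t i, B (t+1) i = B t i + (1 / n) * ∑ j, I j i * (B t j - B t i))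
    (t : ℕ) (i : Fin n) :
    B (t+1) i = (1 - (1/n) * ∑ j, I j i) * B t i + (1/n) * ∑ j, I j i * B t j := by
  rw [hupd]
  have h : ∑ j, I j i * (B t j - B t i)
      = (∑ j, I j i * B t j) - (∑ j, I j i) * B t i := by
    rw [Finset.sum_mul, ← Finset.sum_sub_distrib]
    exact Finset.sum_congr rfl (fun j _ => by ring)
  rw [h]; ring

/-- Basic difference identity. -/
lemma aux_diff_eq
    (hupd : ∀ t i, B (t+1) i = B t i + (1 / n) * ∑ j, I j i * (B t j - B t i))
    (t : ℕ) (i : Fin n) (m : ℝ) :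
    B (t+1) i - m = (1 - (1/n) * ∑ j, I j i) * (B t i - m)
      + (1/n) * ∑ j, I j i * (B t j - m) := by
  have h1 := aux_step_eq I B hupd t i
  have h2 : ∑ j, I j i * (B t j - m)
      = (∑ j, I j i * B t j) - (∑ j, I j i) * m := by
    rw [Finset.sum_mul, ← Finset.sum_sub_distrib]
    exact Finset.sum_congr rfl (fun j _ => by ring)
  rw [h2]; rw [h1]; ring

variable (hI : ∀ i j, I i j ∈ Set.Icc (0:ℝ) 1)

include hn hI

/-- Sum of off-diagonal column entries is at most n-1. -/
lemma aux_col_bound (i : Fin n) :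
    ∑ j ∈ univ.erase i, I j i ≤ (n:ℝ) - 1 := by
  have h := Finset.sum_le_card_nsmul (univ.erase i) (fun j => I j i) 1
    (fun j _ => (hI j i).2)
  have hcard : (univ.erase i).card = n - 1 := by
    rw [Finset.card_erase_of_mem (mem_univ i), Finset.card_univ, Fintype.card_fin]
  rw [hcard] at h
  have : ((n - 1 : ℕ) : ℝ) = (n:ℝ) - 1 := by
    have : (1:ℕ) ≤ n := hn
    push_cast [Nat.cast_sub this]
    ring
  simpa [this] using h

lemma aux_col_le_n (i : Fin n) : ∑ j, I j i ≤ (n:ℝ) := by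
  have h := Finset.sum_le_card_nsmul univ (fun j => I j i) 1
    (fun j _ => (hI j i).2)
  simpa using h

include B

/-- Self-retention: lower bounds with factor 1/n. -/
lemma aux_lower_self
    (hupd : ∀ t i, B (t+1) i = B t i + (1 / n) * ∑ j, I j i * (B t j - B t i))
    (t : ℕ) (m : ℝ) (hm : ∀ j, m ≤ B t j) (i : Fin n) :
    m + (1/n) * (B t i - m) ≤ B (t+1) i := by
  have hn' : (0:ℝ) < n := by exact_mod_cast hn
  have hd := aux_diff_eq I B hupd t i m
  have hsum_split : ∑ j, I j i * (B t j - m)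
      = I i i * (B t i - m) + ∑ j ∈ univ.erase i, I j i * (B t j - m) :=
    (Finset.add_sum_erase _ _ (mem_univ i)).symm
  have hcol_split : ∑ j, I j i = I i i + ∑ j ∈ univ.erase i, I j i :=
    (Finset.add_sum_erase _ _ (mem_univ i)).symm
  set E := ∑ j ∈ univ.erase i, I j i with hE
  set T := ∑ j ∈ univ.erase i, I j i * (B t j - m) with hT
  have hEle : E ≤ (n:ℝ) - 1 := aux_col_bound hn I hI i
  have hTnn : 0 ≤ T := Finset.sum_nonneg (fun j _ =>
    mul_nonneg (hI j i).1 (by linarith [hm j]))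
  have hDnn : 0 ≤ B t i - m := by linarith [hm i]
  rw [hsum_split, hcol_split] at hd
  -- hd : B (t+1) i - m = (1 - (1/n)*(I i i + E))*(B t i - m) + (1/n)*(I i i * (B t i - m) + T)
  have hkey : (1/(n:ℝ)) * (B t i - m) ≤ (1 - (1/n) * E) * (B t i - m) := by
    have hcoef : (1/(n:ℝ)) ≤ 1 - (1/n) * E := by
      rw [div_mul_eq_mul_div, le_sub_iff_add_le, ← add_div, div_le_one hn']
      linarith
    exact mul_le_mul_of_nonneg_right hcoef hDnn
  nlinarith [hd, hTnn, hn', one_div_pos.2 hn']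

/-- Edge propagation: lower bound with factor (1/n) * I j i. -/
lemma aux_lower_edge
    (hupd : ∀ t i, B (t+1) i = B t i + (1 / n) * ∑ j, I j i * (B t j - B t i))
    (t : ℕ) (m : ℝ) (hm : ∀ j, m ≤ B t j) (i j0 : Fin n) :
    m + (1/n) * I j0 i * (B t j0 - m) ≤ B (t+1) i := by
  have hn' : (0:ℝ) < n := by exact_mod_cast hn
  have hd := aux_diff_eq I B hupd t i m
  have hs : ∑ j, I j i ≤ (n:ℝ) := aux_col_le_n hn I hI i
  have hcoef : 0 ≤ 1 - (1/(n:ℝ)) * ∑ j, I j i := by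
    rw [sub_nonneg, div_mul_eq_mul_div, one_mul, div_le_one hn']
    exact hs
  have hDnn : 0 ≤ B t i - m := by linarith [hm i]
  have hterm : I j0 i * (B t j0 - m) ≤ ∑ j, I j i * (B t j - m) :=
    Finset.single_le_sum (f := fun j => I j i * (B t j - m))
      (fun j _ => mul_nonneg (hI j i).1 (by linarith [hm j])) (mem_univ j0)
  nlinarith [mul_nonneg hcoef hDnn, one_div_pos.2 hn',
    mul_le_mul_of_nonneg_left hterm (le_of_lt (one_div_pos.2 hn'))]

/-- Upper bound preservation. -/
lemma aux_upper
    (hupd : ∀ t i, B (t+1) i = B t i + (1 / n) * ∑ j, I j i * (B t j - B t i))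
    (t : ℕ) (M : ℝ) (hM : ∀ j, B t j ≤ M) (i : Fin n) :
    B (t+1) i ≤ M := by
  have hn' : (0:ℝ) < n := by exact_mod_cast hn
  have hd := aux_diff_eq I B hupd t i M
  have hs : ∑ j, I j i ≤ (n:ℝ) := aux_col_le_n hn I hI i
  have hcoef : 0 ≤ 1 - (1/(n:ℝ)) * ∑ j, I j i := by
    rw [sub_nonneg, div_mul_eq_mul_div, one_mul, div_le_one hn']
    exact hs
  have h1 : (1 - (1/(n:ℝ)) * ∑ j, I j i) * (B t i - M) ≤ 0 :=
    mul_nonpos_of_nonneg_of_nonpos hcoef (by linarith [hM i])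
  have h2 : ∑ j, I j i * (B t j - M) ≤ 0 :=
    Finset.sum_nonpos (fun j _ =>
      mul_nonpos_of_nonneg_of_nonpos (hI j i).1 (by linarith [hM j]))
  nlinarith [one_div_pos.2 hn']

/-- Lower bound preservation. -/
lemma aux_lower
    (hupd : ∀ t i, B (t+1) i = B t i + (1 / n) * ∑ j, I j i * (B t j - B t i))
    (t : ℕ) (m : ℝ) (hm : ∀ j, m ≤ B t j) (i : Fin n) :
    m ≤ B (t+1) i := by
  have := aux_lower_self hn I B hI hupd t m hm i
  have hn' : (0:ℝ) < n := by exact_mod_cast hn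
  nlinarith [hm i, one_div_pos.2 hn']

/-- Lower bound persists for all future times. -/
lemma aux_lower_persist
    (hupd : ∀ t i, B (t+1) i = B t i + (1 / n) * ∑ j, I j i * (B t j - B t i))
    (t : ℕ) (m : ℝ) (hm : ∀ j, m ≤ B t j) :
    ∀ s j, m ≤ B (t+s) j := by
  intro s
  induction s with
  | zero => exact hm
  | succ k ih =>
    intro j
    exact aux_lower hn I B hI hupd (t+k) m ih j

/-- Upper bound persists for all future times. -/
lemma aux_upper_persist
    (hupd : ∀ t i, B (t+1) i = B t i + (1 / n) * ∑ j, I j i * (B t j - B t i))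
    (t : ℕ) (M : ℝ) (hM : ∀ j, B t j ≤ M) :
    ∀ s j, B (t+s) j ≤ M := by
  intro s
  induction s with
  | zero => exact hM
  | succ k ih =>
    intro j
    exact aux_upper hn I B hI hupd (t+k) M ih j

end Aux

theorem balanced_weakly_connected_consensus_value (n : ℕ) (hn : 0 < n)
    (I : Fin n → Fin n → ℝ) (hI : ∀ i j, I i j ∈ Set.Icc (0:ℝ) 1)
    (hbal : ∀ i : Fin n, ∑ j, I i j = ∑ j, I j i)
    (hwc : WeaklyConnected I)
    (B : ℕ → Fin n → ℝ) (hB : ∀ t i, B t i ∈ Set.Icc (0:ℝ) 1)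
    (hupd : ∀ t i, B (t+1) i = B t i + (1 / n) * ∑ j, I j i * (B t j - B t i))
    (i : Fin n) :
    Filter.Tendsto (fun t => B t i) Filter.atTop
      (nhds ((1 / (n : ℝ)) * ∑ j, B 0 j)) := by
  classical
  have hn' : (0:ℝ) < n := by exact_mod_cast hn
  haveI : Nonempty (Fin n) := ⟨⟨0, hn⟩⟩
  have huniv : (univ : Finset (Fin n)).Nonempty := univ_nonempty
  -- the constant c
  set P : Finset (Fin n × Fin n) := univ.filter (fun p => 0 < I p.1 p.2) with hP
  set ε : ℝ := if h : P.Nonempty then P.inf' h (fun p => I p.1 p.2) else 1 with hε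
  have hεpos : 0 < ε := by
    rw [hε]
    split_ifs with h
    · rw [Finset.lt_inf'_iff]
      intro p hp
      simpa [hP] using (Finset.mem_filter.1 hp).2
    · norm_num
  have hεle : ∀ j i : Fin n, 0 < I j i → ε ≤ I j i := by
    intro j i hji
    have hmem : (j, i) ∈ P := by simp [hP, hji]
    rw [hε]
    rw [dif_pos ⟨_, hmem⟩]
    exact Finset.inf'_le _ hmem
  set c : ℝ := (1/n) * min ε 1 with hc
  have hcpos : 0 < c := by
    apply mul_pos (one_div_pos.2 hn')
    exact lt_min hεpos one_pos
  have hcle : c ≤ 1/n := by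
    rw [hc]
    nlinarith [min_le_right ε 1, one_div_pos.2 hn', lt_min hεpos one_pos]
  have hcedge : ∀ j i : Fin n, 0 < I j i → c ≤ (1/n) * I j i := by
    intro j i hji
    rw [hc]
    have := hεle j i hji
    have := min_le_left ε 1
    nlinarith [one_div_pos.2 hn']
  -- path propagation
  have hprop : ∀ a b : Fin n, ∃ L : ℕ, ∀ t (m : ℝ), (∀ j, m ≤ B t j) →
      m + c ^ L * (B t a - m) ≤ B (t + L) b := by
    intro a b
    induction aux_strong_conn I hI hbal hwc a b with
    | refl =>
      exact ⟨0, fun t m hm => by simp⟩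
    | tail _ h ih =>
      rename_i x y _
      obtain ⟨L, hL⟩ := ih
      refine ⟨L + 1, fun t m hm => ?_⟩
      have h1 := hL t m hm
      have hm' : ∀ j, m ≤ B (t + L) j := aux_lower_persist hn I B hI hupd t m hm L
      have h2 := aux_lower_edge hn I B hI hupd (t + L) m hm' y x
      have hxnn : 0 ≤ B (t + L) x - m := by linarith [hm' x]
      have hce := hcedge x y h
      have h3 : c * (c ^ L * (B t a - m)) ≤ c * (B (t + L) x - m) := by
        apply mul_le_mul_of_nonneg_left _ (le_of_lt hcpos)
        linarith
      have h4 : c * (B (t + L) x - m) ≤ (1/n) * I x y * (B (t + L) x - m) :=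
        mul_le_mul_of_nonneg_right hce hxnn
      have heq : t + (L + 1) = (t + L) + 1 := by ring
      rw [heq]
      calc m + c ^ (L+1) * (B t a - m)
          = m + c * (c ^ L * (B t a - m)) := by ring
        _ ≤ m + (1/n) * I x y * (B (t + L) x - m) := by linarith
        _ ≤ B ((t + L) + 1) y := h2
  -- padding to a uniform length
  choose Lf hLf using hprop
  set K : ℕ := (univ : Finset (Fin n × Fin n)).sup (fun p => Lf p.1 p.2) + 1 with hK
  have hKprop : ∀ a b : Fin n, ∀ t (m : ℝ), (∀ j, m ≤ B t j) →
      m + c ^ K * (B t a - m) ≤ B (t + K) b := by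
    intro a b
    have hLab : Lf a b ≤ K := by
      have : Lf a b ≤ (univ : Finset (Fin n × Fin n)).sup (fun p => Lf p.1 p.2) :=
        Finset.le_sup (f := fun p : Fin n × Fin n => Lf p.1 p.2) (mem_univ (a, b))
      omega
    -- prove for all L' ≥ Lf a b by induction
    have main : ∀ L', Lf a b ≤ L' → ∀ t (m : ℝ), (∀ j, m ≤ B t j) →
        m + c ^ L' * (B t a - m) ≤ B (t + L') b := by
      intro L' hL'
      induction L', hL' using Nat.le_induction with
      | base => exact hLf a b
      | succ L hle ih =>
        intro t m hm
        have h1 := ih t m hm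
        have hm' : ∀ j, m ≤ B (t + L) j := aux_lower_persist hn I B hI hupd t m hm L
        have h2 := aux_lower_self hn I B hI hupd (t + L) m hm' b
        have hbnn : 0 ≤ B (t + L) b - m := by linarith [hm' b]
        have h3 : c * (c ^ L * (B t a - m)) ≤ c * (B (t + L) b - m) := by
          apply mul_le_mul_of_nonneg_left _ (le_of_lt hcpos)
          linarith
        have h4 : c * (B (t + L) b - m) ≤ (1/n) * (B (t + L) b - m) :=
          mul_le_mul_of_nonneg_right hcle hbnn
        have heq : t + (L + 1) = (t + L) + 1 := by ring
        rw [heq]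
        calc m + c ^ (L+1) * (B t a - m)
            = m + c * (c ^ L * (B t a - m)) := by ring
          _ ≤ m + (1/n) * (B (t + L) b - m) := by linarith
          _ ≤ B ((t + L) + 1) b := h2
    exact main K hLab
  -- min, max, diameter
  set mm : ℕ → ℝ := fun t => univ.inf' huniv (B t) with hmm
  set MM : ℕ → ℝ := fun t => univ.sup' huniv (B t) with hMM
  set D : ℕ → ℝ := fun t => MM t - mm t with hD
  have hmle : ∀ t j, mm t ≤ B t j := fun t j => Finset.inf'_le _ (mem_univ j)
  have hMge : ∀ t j, B t j ≤ MM t := fun t j => Finset.le_sup' _ (mem_univ j)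
  have hDnn : ∀ t, 0 ≤ D t := by
    intro t
    have := hmle t (Classical.arbitrary (Fin n))
    have := hMge t (Classical.arbitrary (Fin n))
    simp only [hD]
    linarith
  have hmmono : ∀ t s, mm t ≤ mm (t + s) := by
    intro t s
    apply Finset.le_inf'
    intro j _
    exact aux_lower_persist hn I B hI hupd t (mm t) (hmle t) s j
  have hMmono : ∀ t s, MM (t + s) ≤ MM t := by
    intro t s
    apply Finset.sup'_le
    intro j _
    exact aux_upper_persist hn I B hI hupd t (MM t) (hMge t) s j
  have hDmono : ∀ t s, D (t + s) ≤ D t := by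
    intro t s
    have := hmmono t s
    have := hMmono t s
    simp only [hD]
    linarith
  -- contraction
  have hcK : 0 < c ^ K := pow_pos hcpos K
  have hcK1 : c ^ K ≤ 1 := by
    apply pow_le_one₀ (le_of_lt hcpos)
    calc c ≤ 1/(n:ℝ) := hcle
      _ ≤ 1 := by rw [div_le_one hn']; exact_mod_cast hn
  set q : ℝ := 1 - c ^ K with hq
  have hq0 : 0 ≤ q := by simp [hq]; linarith
  have hq1 : q < 1 := by simp [hq]; linarith
  have hcontr : ∀ t, D (t + K) ≤ q * D t := by
    intro t
    obtain ⟨i0, _, hi0⟩ := Finset.exists_mem_eq_sup' huniv (B t)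
    have hlow : ∀ j : Fin n, mm t + c ^ K * (D t) ≤ B (t + K) j := by
      intro j
      have := hKprop i0 j t (mm t) (hmle t)
      have heq : B t i0 - mm t = D t := by
        simp only [hD, hMM]
        rw [hi0]
      rw [heq] at this
      exact this
    have hminlow : mm t + c ^ K * D t ≤ mm (t + K) := by
      apply Finset.le_inf'
      intro j _
      exact hlow j
    have hMup : MM (t + K) ≤ MM t := hMmono t K
    simp only [hD, hq] at *
    nlinarith
  -- D(s*K) ≤ q^s * D 0
  have hgeo : ∀ s : ℕ, D (s * K) ≤ q ^ s * D 0 := by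
    intro s
    induction s with
    | zero => simp
    | succ k ih =>
      have h1 : D ((k+1) * K) ≤ q * D (k * K) := by
        have := hcontr (k * K)
        have heq : (k+1) * K = k * K + K := by ring
        rw [heq]
        exact this
      have h2 : q * D (k * K) ≤ q * (q ^ k * D 0) :=
        mul_le_mul_of_nonneg_left ih hq0
      calc D ((k+1) * K) ≤ q * (q ^ k * D 0) := le_trans h1 h2
        _ = q ^ (k+1) * D 0 := by ring
  -- D tends to 0
  have hDto0 : Filter.Tendsto D Filter.atTop (nhds 0) := by
    rw [Metric.tendsto_atTop]
    intro δ hδ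
    have hqs : Filter.Tendsto (fun s : ℕ => q ^ s * D 0) Filter.atTop (nhds 0) := by
      have := tendsto_pow_atTop_nhds_zero_of_lt_one hq0 hq1
      simpa using this.mul_const (D 0)
    rw [Metric.tendsto_atTop] at hqs
    obtain ⟨s, hs⟩ := hqs δ hδ
    refine ⟨s * K, fun t ht => ?_⟩
    have h1 : D t ≤ D (s * K) := by
      have := hDmono (s * K) (t - s * K)
      rwa [Nat.add_sub_cancel' ht] at this
    have h2 := hs s (le_refl s)
    rw [Real.dist_eq] at h2 ⊢
    have h3 : q ^ s * D 0 < δ := by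
      have : |q ^ s * D 0 - 0| < δ := h2
      rw [sub_zero] at this
      calc q ^ s * D 0 ≤ |q ^ s * D 0| := le_abs_self _
        _ < δ := this
    have h4 : D t < δ := lt_of_le_of_lt (le_trans h1 (hgeo s)) h3
    rw [sub_zero, abs_of_nonneg (hDnn t)]
    exact h4
  -- sum invariance
  have hsuminv : ∀ t, ∑ j, B t j = ∑ j, B 0 j := by
    intro t
    induction t with
    | zero => rfl
    | succ k ih =>
      have hzero : ∑ i', ∑ j, I j i' * (B k j - B k i') = 0 := by
        have h1 : ∑ i', ∑ j, I j i' * (B k j - B k i')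
            = (∑ i', ∑ j, I j i' * B k j) - ∑ i', ∑ j, I j i' * B k i' := by
          rw [← Finset.sum_sub_distrib]
          apply Finset.sum_congr rfl
          intro x _
          rw [← Finset.sum_sub_distrib]
          exact Finset.sum_congr rfl (fun j _ => by ring)
        have h2 : ∑ i', ∑ j, I j i' * B k j = ∑ j, (∑ i', I j i') * B k j := by
          rw [Finset.sum_comm]
          exact Finset.sum_congr rfl (fun j _ => (Finset.sum_mul _ _ _).symm)
        have h3 : ∑ i', ∑ j, I j i' * B k i' = ∑ i', (∑ j, I j i') * B k i' := by
          exact Finset.sum_congr rfl (fun x _ => (Finset.sum_mul _ _ _).symm)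
        have h4 : ∀ j : Fin n, (∑ i', I j i') * B k j = (∑ i', I i' j) * B k j := by
          intro j
          rw [hbal j]
        rw [h1, h2, h3]
        rw [Finset.sum_congr rfl (fun j _ => h4 j)]
        simp
      calc ∑ j, B (k+1) j
          = ∑ j, (B k j + (1/n) * ∑ j', I j' j * (B k j' - B k j)) :=
            Finset.sum_congr rfl (fun j _ => hupd k j)
        _ = (∑ j, B k j) + (1/n) * ∑ j, ∑ j', I j' j * (B k j' - B k j) := by
            rw [Finset.sum_add_distrib, Finset.mul_sum]
        _ = ∑ j, B k j := by rw [hzero]; ring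
        _ = ∑ j, B 0 j := ih
  set avg : ℝ := (1 / (n : ℝ)) * ∑ j, B 0 j with havg
  -- avg between min and max
  have havgbd : ∀ t, mm t ≤ avg ∧ avg ≤ MM t := by
    intro t
    have hsum : ∑ j, B t j = ∑ j, B 0 j := hsuminv t
    have hlow : (n:ℝ) * mm t ≤ ∑ j, B t j := by
      calc (n:ℝ) * mm t = ∑ _j : Fin n, mm t := by
            rw [Finset.sum_const, Finset.card_univ, Fintype.card_fin, nsmul_eq_mul]
        _ ≤ ∑ j, B t j := Finset.sum_le_sum (fun j _ => hmle t j)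
    have hhigh : ∑ j, B t j ≤ (n:ℝ) * MM t := by
      calc ∑ j, B t j ≤ ∑ _j : Fin n, MM t := Finset.sum_le_sum (fun j _ => hMge t j)
        _ = (n:ℝ) * MM t := by
            rw [Finset.sum_const, Finset.card_univ, Fintype.card_fin, nsmul_eq_mul]
    constructor
    · rw [havg, ← hsum]
      rw [div_mul_eq_mul_div, one_mul, le_div_iff₀ hn']
      linarith
    · rw [havg, ← hsum]
      rw [div_mul_eq_mul_div, one_mul, div_le_iff₀ hn']
      linarith
  -- squeeze
  have hsq1 : ∀ t, avg - D t ≤ B t i := by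
    intro t
    obtain ⟨h1, h2⟩ := havgbd t
    have := hmle t i
    simp only [hD] at *
    linarith
  have hsq2 : ∀ t, B t i ≤ avg + D t := by
    intro t
    obtain ⟨h1, h2⟩ := havgbd t
    have := hMge t i
    simp only [hD] at *
    linarith
  have hlim1 : Filter.Tendsto (fun t => avg - D t) Filter.atTop (nhds avg) := by
    have := Filter.Tendsto.const_sub avg hDto0
    simpa using this
  have hlim2 : Filter.Tendsto (fun t => avg + D t) Filter.atTop (nhds avg) := by
    have := Filter.Tendsto.const_add avg hDto0
    simpa using this
  exact tendsto_of_tendsto_of_tendsto_of_le_of_le hlim1 hlim2 hsq1 hsq2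
end

section
/- Under the confirmation-bias update in a strongly connected influence graph: if some agent k has B_k^0 ∉ {0,1}, then all agents' beliefs converge to a common value (for all i, j, lim_{t→∞} B_i^t = lim_{t→∞} B_j^t); otherwise (all initial beliefs are 0 or 1) every agent's belief is constant in time. -/
section CB
variable {n : ℕ} {I : Fin n → Fin n → ℝ} {B : ℕ → Fin n → ℝ}

lemma cb_term_ge (hI0 : 0 ≤ (i' : ℝ)) (hI1 : i' ≤ 1) (hj0 : 0 ≤ (bj : ℝ)) (hj1 : bj ≤ 1)
    (hi0 : 0 ≤ (bi : ℝ)) (hi1 : bi ≤ 1) (hxj : x ≤ bj) (hxi : x ≤ bi) :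
    x - bi ≤ (1 - |bj - bi|) * i' * (bj - bi) := by
  rcases abs_cases (bj - bi) with ⟨he, h0⟩ | ⟨he, h0⟩ <;> rw [he]
  · have h1 : 0 ≤ (1 - (bj - bi)) * i' := mul_nonneg (by linarith) hI0
    nlinarith [mul_nonneg h1 h0]
  · have h1 : (1 - -(bj - bi)) * i' ≤ 1 := by nlinarith
    have h2 : (1:ℝ) * (bj - bi) ≤ (1 - -(bj - bi)) * i' * (bj - bi) :=
      mul_le_mul_of_nonpos_right h1 (le_of_lt h0)
    linarith

lemma cb_term_le (hI0 : 0 ≤ (i' : ℝ)) (hI1 : i' ≤ 1) (hj0 : 0 ≤ (bj : ℝ)) (hj1 : bj ≤ 1)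
    (hi0 : 0 ≤ (bi : ℝ)) (hi1 : bi ≤ 1) (hxj : bj ≤ y) (hxi : bi ≤ y) :
    (1 - |bj - bi|) * i' * (bj - bi) ≤ y - bi := by
  rcases abs_cases (bj - bi) with ⟨he, h0⟩ | ⟨he, h0⟩ <;> rw [he]
  · have h1 : (1 - (bj - bi)) * i' ≤ 1 := by nlinarith
    have h2 : (1 - (bj - bi)) * i' * (bj - bi) ≤ (1:ℝ) * (bj - bi) :=
      mul_le_mul_of_nonneg_right h1 h0
    linarith
  · have h1 : 0 ≤ (1 - -(bj - bi)) * i' := mul_nonneg (by linarith) hI0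
    have h2 : (1 - -(bj - bi)) * i' * (bj - bi) ≤ 0 := mul_nonpos_of_nonneg_of_nonpos h1 (le_of_lt h0)
    linarith

/-- lower bound preserved -/
lemma cb_lower (hn : 0 < n) (hI : ∀ i j, I i j ∈ Set.Icc (0:ℝ) 1)
    (hB : ∀ t i, B t i ∈ Set.Icc (0:ℝ) 1)
    (hupd : ∀ t i, B (t+1) i =
      B t i + (1 / n) * ∑ j, (1 - |B t j - B t i|) * I j i * (B t j - B t i))
    (t : ℕ) (i : Fin n) (x : ℝ) (hx : ∀ j, x ≤ B t j) :
    x ≤ B (t+1) i := by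
  have hterm : ∀ j : Fin n, (x - B t i) ≤ (1 - |B t j - B t i|) * I j i * (B t j - B t i) :=
    fun j => cb_term_ge (hI j i).1 (hI j i).2 (hB t j).1 (hB t j).2 (hB t i).1 (hB t i).2
      (hx j) (hx i)
  have hsum : (n : ℝ) * (x - B t i) ≤ ∑ j, (1 - |B t j - B t i|) * I j i * (B t j - B t i) := by
    calc (n : ℝ) * (x - B t i) = ∑ _j : Fin n, (x - B t i) := by
          simp [Finset.sum_const, mul_comm]; ring
      _ ≤ _ := Finset.sum_le_sum (fun j _ => hterm j)
  have hn' : (0:ℝ) < n := by exact_mod_cast hn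
  rw [hupd t i]
  have h3 : (1 / (n:ℝ)) * ((n:ℝ) * (x - B t i)) ≤ (1 / n) * ∑ j, (1 - |B t j - B t i|) * I j i * (B t j - B t i) :=
    mul_le_mul_of_nonneg_left hsum (by positivity)
  calc x = B t i + (1 / (n:ℝ)) * ((n:ℝ) * (x - B t i)) := by field_simp; ring
    _ ≤ _ := by linarith

/-- upper bound preserved -/
lemma cb_upper (hn : 0 < n) (hI : ∀ i j, I i j ∈ Set.Icc (0:ℝ) 1)
    (hB : ∀ t i, B t i ∈ Set.Icc (0:ℝ) 1)
    (hupd : ∀ t i, B (t+1) i =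
      B t i + (1 / n) * ∑ j, (1 - |B t j - B t i|) * I j i * (B t j - B t i))
    (t : ℕ) (i : Fin n) (y : ℝ) (hy : ∀ j, B t j ≤ y) :
    B (t+1) i ≤ y := by
  have hterm : ∀ j : Fin n, (1 - |B t j - B t i|) * I j i * (B t j - B t i) ≤ (y - B t i) :=
    fun j => cb_term_le (hI j i).1 (hI j i).2 (hB t j).1 (hB t j).2 (hB t i).1 (hB t i).2
      (hy j) (hy i)
  have hsum : ∑ j, (1 - |B t j - B t i|) * I j i * (B t j - B t i) ≤ (n : ℝ) * (y - B t i) := by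
    calc ∑ j, (1 - |B t j - B t i|) * I j i * (B t j - B t i)
        ≤ ∑ _j : Fin n, (y - B t i) := Finset.sum_le_sum (fun j _ => hterm j)
      _ = (n : ℝ) * (y - B t i) := by simp [Finset.sum_const, mul_comm]; ring
  have hn' : (0:ℝ) < n := by exact_mod_cast hn
  rw [hupd t i]
  have h3 : (1 / (n:ℝ)) * ∑ j, (1 - |B t j - B t i|) * I j i * (B t j - B t i)
      ≤ (1 / (n:ℝ)) * ((n:ℝ) * (y - B t i)) :=
    mul_le_mul_of_nonneg_left hsum (by positivity)
  have h2 : B t i + (1 / (n:ℝ)) * ((n:ℝ) * (y - B t i)) = y := by field_simp; ring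
  linarith

/-- term lower bound -K with K = bi*(1-bi) if bi ≤ 1/2 else 1/4 -/
lemma cb_term_geK (hI0 : 0 ≤ (i' : ℝ)) (hI1 : i' ≤ 1) (hj0 : 0 ≤ (bj : ℝ)) (hj1 : bj ≤ 1)
    (hi0 : 0 ≤ (bi : ℝ)) (hi1 : bi ≤ 1) (K : ℝ)
    (hK : (bi ≤ 1/2 ∧ K = bi * (1 - bi)) ∨ (1/2 < bi ∧ K = 1/4)) :
    -K ≤ (1 - |bj - bi|) * i' * (bj - bi) := by
  rcases abs_cases (bj - bi) with ⟨he, h0⟩ | ⟨he, h0⟩ <;> rw [he]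
  · -- term nonneg, K nonneg
    have h1 : 0 ≤ (1 - (bj - bi)) * i' * (bj - bi) :=
      mul_nonneg (mul_nonneg (by linarith) hI0) h0
    rcases hK with ⟨_, hK⟩ | ⟨_, hK⟩ <;> nlinarith
  · -- e := bj - bi < 0, term = (1+e) i' e ≥ (1+e) e ≥ -K
    have h1 : (1 - -(bj - bi)) * i' ≤ 1 - -(bj - bi) := by nlinarith
    have h2 : (1 - -(bj - bi)) * (bj - bi) ≤ (1 - -(bj - bi)) * i' * (bj - bi) :=
      mul_le_mul_of_nonpos_right h1 (le_of_lt h0)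
    have h3 : -K ≤ (1 - -(bj - bi)) * (bj - bi) := by
      rcases hK with ⟨hb, hK⟩ | ⟨hb, hK⟩ <;> subst hK <;>
        nlinarith [sq_nonneg (bj - bi + 1/2)]
    linarith

/-- positivity preserved -/
lemma cb_pos (hn : 0 < n) (hI : ∀ i j, I i j ∈ Set.Icc (0:ℝ) 1)
    (hB : ∀ t i, B t i ∈ Set.Icc (0:ℝ) 1)
    (hupd : ∀ t i, B (t+1) i =
      B t i + (1 / n) * ∑ j, (1 - |B t j - B t i|) * I j i * (B t j - B t i))
    (t : ℕ) (i : Fin n) (h : 0 < B t i) : 0 < B (t+1) i := by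
  have hn' : (0:ℝ) < n := by exact_mod_cast hn
  set K : ℝ := if B t i ≤ 1/2 then B t i * (1 - B t i) else 1/4 with hKdef
  have hK : (B t i ≤ 1/2 ∧ K = B t i * (1 - B t i)) ∨ (1/2 < B t i ∧ K = 1/4) := by
    by_cases hc : B t i ≤ 1/2
    · left; exact ⟨hc, by rw [hKdef, if_pos hc]⟩
    · right; exact ⟨lt_of_not_ge hc, by rw [hKdef, if_neg hc]⟩
  have hterm : ∀ j : Fin n, -K ≤ (1 - |B t j - B t i|) * I j i * (B t j - B t i) := fun j =>
    cb_term_geK (hI j i).1 (hI j i).2 (hB t j).1 (hB t j).2 (hB t i).1 (hB t i).2 K hK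
  have hsum : (n : ℝ) * (-K) ≤ ∑ j, (1 - |B t j - B t i|) * I j i * (B t j - B t i) := by
    calc (n : ℝ) * (-K) = ∑ _j : Fin n, (-K) := by simp [Finset.sum_const, mul_comm]
      _ ≤ _ := Finset.sum_le_sum (fun j _ => hterm j)
  have h3 : (1 / (n:ℝ)) * ((n:ℝ) * (-K)) ≤ (1 / n) * ∑ j, (1 - |B t j - B t i|) * I j i * (B t j - B t i) :=
    mul_le_mul_of_nonneg_left hsum (by positivity)
  have h4 : (1 / (n:ℝ)) * ((n:ℝ) * (-K)) = -K := by field_simp [mul_comm]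
  rw [hupd t i]
  rcases hK with ⟨hb, hKe⟩ | ⟨hb, hKe⟩ <;> nlinarith

/-- pull off the 0 boundary with an interior neighbor -/
lemma cb_pos_of_nbr (hn : 0 < n) (hI : ∀ i j, I i j ∈ Set.Icc (0:ℝ) 1)
    (hB : ∀ t i, B t i ∈ Set.Icc (0:ℝ) 1)
    (hupd : ∀ t i, B (t+1) i =
      B t i + (1 / n) * ∑ j, (1 - |B t j - B t i|) * I j i * (B t j - B t i))
    (t : ℕ) (i : Fin n) (h0 : B t i = 0)
    (hnbr : ∃ j, 0 < I j i ∧ 0 < B t j ∧ B t j < 1) : 0 < B (t+1) i := by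
  have hn' : (0:ℝ) < n := by exact_mod_cast hn
  obtain ⟨j0, hj0I, hj0l, hj0u⟩ := hnbr
  have hterm : ∀ j ∈ Finset.univ, (0:ℝ) ≤ (1 - |B t j - B t i|) * I j i * (B t j - B t i) := by
    intro j _
    rw [h0, sub_zero, abs_of_nonneg (hB t j).1]
    exact mul_nonneg (mul_nonneg (by linarith [(hB t j).2]) (hI j i).1) (hB t j).1
  have hpos : (0:ℝ) < (1 - |B t j0 - B t i|) * I j0 i * (B t j0 - B t i) := by
    rw [h0, sub_zero, abs_of_nonneg (hB t j0).1]
    exact mul_pos (mul_pos (by linarith) hj0I) hj0l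
  have hsum : 0 < ∑ j, (1 - |B t j - B t i|) * I j i * (B t j - B t i) :=
    Finset.sum_pos' hterm ⟨j0, Finset.mem_univ j0, hpos⟩
  rw [hupd t i]
  have := mul_pos (show (0:ℝ) < 1/n by positivity) hsum
  linarith

/-- key one-step convex bound: the next value of i is at most
    δ * (current value of j0) + (1-δ) * M, when j0 = i or j0 influences i. -/
lemma cb_convex (hn : 0 < n) (hI : ∀ i j, I i j ∈ Set.Icc (0:ℝ) 1)
    (hB : ∀ t i, B t i ∈ Set.Icc (0:ℝ) 1)
    (hupd : ∀ t i, B (t+1) i =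
      B t i + (1 / n) * ∑ j, (1 - |B t j - B t i|) * I j i * (B t j - B t i))
    (t : ℕ) (i j0 : Fin n) (m M δ : ℝ)
    (hm : ∀ j, m ≤ B t j) (hM : ∀ j, B t j ≤ M)
    (hδ0 : 0 ≤ δ)
    (hδle : (j0 = i ∧ δ ≤ 1/n) ∨ (δ ≤ (1/n) * ((1 - (M - m)) * I j0 i))) :
    B (t+1) i ≤ δ * B t j0 + (1 - δ) * M := by
  have hn' : (0:ℝ) < n := by exact_mod_cast hn
  set c : Fin n → ℝ := fun j => (1/n) * ((1 - |B t j - B t i|) * I j i) with hc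
  have hc0 : ∀ j, 0 ≤ c j := by
    intro j
    have h1 : |B t j - B t i| ≤ 1 := by
      rw [abs_le]; constructor <;> [linarith [(hB t j).1, (hB t i).2]; linarith [(hB t j).2, (hB t i).1]]
    exact mul_nonneg (by positivity) (mul_nonneg (by linarith) (hI j i).1)
  have hc1 : ∀ j, c j ≤ 1/n := by
    intro j
    have h1 : (1 - |B t j - B t i|) * I j i ≤ 1 :=
      mul_le_one₀ (by linarith [abs_nonneg (B t j - B t i)]) (hI j i).1 (hI j i).2
    calc c j ≤ (1/n) * 1 := mul_le_mul_of_nonneg_left h1 (by positivity)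
      _ = 1/n := mul_one _
  set S : ℝ := ∑ j ∈ Finset.univ.erase i, c j with hS
  set w : Fin n → ℝ := fun j => if j = i then 1 - S else c j with hw
  have hS0 : 0 ≤ S := Finset.sum_nonneg (fun j _ => hc0 j)
  have hScard : S ≤ ((Finset.univ.erase i).card : ℝ) * (1/n) := by
    calc S ≤ ∑ j ∈ Finset.univ.erase i, (1/n : ℝ) := Finset.sum_le_sum (fun j _ => hc1 j)
      _ = _ := by rw [Finset.sum_const, nsmul_eq_mul]
  have hcard : ((Finset.univ.erase i).card : ℝ) ≤ (n:ℝ) - 1 := by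
    have h1 : (Finset.univ.erase i).card = n - 1 := by
      rw [Finset.card_erase_of_mem (Finset.mem_univ i), Finset.card_univ, Fintype.card_fin]
    rw [h1, Nat.cast_sub hn]; simp
  have hSle : S ≤ 1 - 1/n := by
    have h2 : ((Finset.univ.erase i).card : ℝ) * (1/n) ≤ ((n:ℝ) - 1) * (1/n) :=
      mul_le_mul_of_nonneg_right hcard (by positivity)
    have h3 : ((n:ℝ) - 1) * (1/n) = 1 - 1/n := by field_simp
    linarith
  have hwi : (1:ℝ)/n ≤ w i := by simp only [hw, if_pos rfl]; linarith
  have hw0 : ∀ j, 0 ≤ w j := by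
    intro j
    by_cases h : j = i
    · subst h; simp only [hw, if_pos rfl]
      have h2 : (0:ℝ) < 1/n := one_div_pos.mpr hn'
      linarith
    · simp only [hw, if_neg h]; exact hc0 j
  have hwsum : ∑ j, w j = 1 := by
    rw [← Finset.add_sum_erase _ w (Finset.mem_univ i)]
    have h1 : ∑ j ∈ Finset.univ.erase i, w j = S := by
      apply Finset.sum_congr rfl
      intro j hj
      simp only [hw, if_neg (Finset.ne_of_mem_erase hj)]
    rw [h1]; simp only [hw, if_pos rfl]; ring
  -- expansion
  have hBw : B (t+1) i = ∑ j, w j * B t j := by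
    have e0 : B (t+1) i = B t i + ∑ j, c j * (B t j - B t i) := by
      rw [hupd t i, Finset.mul_sum]
      congr 1
      apply Finset.sum_congr rfl
      intro j _
      simp only [hc]; ring
    have e1 : ∑ j, c j * (B t j - B t i) = ∑ j ∈ Finset.univ.erase i, c j * (B t j - B t i) :=
      (Finset.sum_erase _ (by simp)).symm
    have e2 : ∑ j ∈ Finset.univ.erase i, c j * (B t j - B t i)
        = (∑ j ∈ Finset.univ.erase i, c j * B t j) - S * B t i := by
      rw [hS, Finset.sum_mul, ← Finset.sum_sub_distrib]
      apply Finset.sum_congr rfl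
      intro j _; ring
    rw [e0, e1, e2, ← Finset.add_sum_erase _ (fun j => w j * B t j) (Finset.mem_univ i)]
    have h1 : ∑ j ∈ Finset.univ.erase i, w j * B t j = ∑ j ∈ Finset.univ.erase i, c j * B t j := by
      apply Finset.sum_congr rfl
      intro j hj
      simp only [hw, if_neg (Finset.ne_of_mem_erase hj)]
    rw [h1]; simp only [hw, if_pos rfl]; ring
  -- weight of j0
  have hwj0 : δ ≤ w j0 := by
    rcases hδle with ⟨rfl, hd⟩ | hd
    · calc δ ≤ 1/n := hd
        _ ≤ w j0 := hwi
    · by_cases h : j0 = i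
      · subst h; calc δ ≤ (1/n) * ((1 - (M - m)) * I j0 j0) := hd
          _ ≤ 1/n := by
              have := hc1 j0
              calc (1/n : ℝ) * ((1 - (M - m)) * I j0 j0) ≤ (1/n) * 1 := by
                    apply mul_le_mul_of_nonneg_left _ (by positivity)
                    apply mul_le_one₀ _ (hI j0 j0).1 (hI j0 j0).2
                    have := hm j0; have := hM j0; linarith
                _ = 1/n := mul_one _
          _ ≤ w j0 := hwi
      · simp only [hw, if_neg h]
        have habs : |B t j0 - B t i| ≤ M - m := by
          rw [abs_le]; constructor <;> [linarith [hm j0, hM i]; linarith [hM j0, hm i]]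
        calc δ ≤ (1/n) * ((1 - (M - m)) * I j0 i) := hd
          _ ≤ c j0 := by
              apply mul_le_mul_of_nonneg_left _ (by positivity)
              exact mul_le_mul_of_nonneg_right (by linarith) (hI j0 i).1
  -- final bound
  have hsplit : ∑ j, w j * B t j = w j0 * B t j0 + ∑ j ∈ Finset.univ.erase j0, w j * B t j :=
    (Finset.add_sum_erase _ _ (Finset.mem_univ j0)).symm
  have hrest : ∑ j ∈ Finset.univ.erase j0, w j * B t j ≤ (1 - w j0) * M := by
    have h1 : ∑ j ∈ Finset.univ.erase j0, w j * B t j ≤ ∑ j ∈ Finset.univ.erase j0, w j * M :=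
      Finset.sum_le_sum (fun j _ => mul_le_mul_of_nonneg_left (hM j) (hw0 j))
    have h2 : ∑ j ∈ Finset.univ.erase j0, w j * M = (∑ j ∈ Finset.univ.erase j0, w j) * M := by
      rw [Finset.sum_mul]
    have h3 : ∑ j ∈ Finset.univ.erase j0, w j = 1 - w j0 := by
      have := Finset.add_sum_erase Finset.univ w (Finset.mem_univ j0)
      rw [hwsum] at this; linarith
    rw [h2, h3] at h1; exact h1
  have hfin : w j0 * B t j0 + (1 - w j0) * M ≤ δ * B t j0 + (1 - δ) * M := by
    nlinarith [mul_nonneg (sub_nonneg.2 hwj0) (sub_nonneg.2 (hM j0))]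
  rw [hBw, hsplit]
  linarith

/-- symmetric dynamics for 1 - B -/
lemma cb_symm
    (hupd : ∀ t i, B (t+1) i =
      B t i + (1 / n) * ∑ j, (1 - |B t j - B t i|) * I j i * (B t j - B t i)) :
    ∀ t i, (fun t i => 1 - B t i) (t+1) i = (fun t i => 1 - B t i) t i +
      (1 / n) * ∑ j, (1 - |(fun t i => 1 - B t i) t j - (fun t i => 1 - B t i) t i|) * I j i *
        ((fun t i => 1 - B t i) t j - (fun t i => 1 - B t i) t i) := by
  intro t i
  simp only
  have e : ∑ j, (1 - |1 - B t j - (1 - B t i)|) * I j i * (1 - B t j - (1 - B t i))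
      = -∑ j, (1 - |B t j - B t i|) * I j i * (B t j - B t i) := by
    rw [← Finset.sum_neg_distrib]
    apply Finset.sum_congr rfl
    intro j _
    have h1 : 1 - B t j - (1 - B t i) = -(B t j - B t i) := by ring
    rw [h1, abs_neg]; ring
  rw [e, hupd t i]; ring

/-- one-step interiority -/
lemma cb_interior_succ (hn : 0 < n) (hI : ∀ i j, I i j ∈ Set.Icc (0:ℝ) 1)
    (hB : ∀ t i, B t i ∈ Set.Icc (0:ℝ) 1)
    (hupd : ∀ t i, B (t+1) i =
      B t i + (1 / n) * ∑ j, (1 - |B t j - B t i|) * I j i * (B t j - B t i))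
    (t : ℕ) (i : Fin n)
    (h : (0 < B t i ∧ B t i < 1) ∨ (∃ j, 0 < I j i ∧ 0 < B t j ∧ B t j < 1)) :
    0 < B (t+1) i ∧ B (t+1) i < 1 := by
  have hBC : ∀ t i, (fun t i => 1 - B t i) t i ∈ Set.Icc (0:ℝ) 1 := by
    intro t i; have := hB t i; simp only [Set.mem_Icc] at *; constructor <;> linarith [this.1, this.2]
  have hupdC := cb_symm hupd
  constructor
  · rcases h with ⟨h1, _⟩ | ⟨j, hj1, hj2, hj3⟩
    · exact cb_pos hn hI hB hupd t i h1
    · rcases lt_or_eq_of_le (hB t i).1 with h1 | h1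
      · exact cb_pos hn hI hB hupd t i h1
      · exact cb_pos_of_nbr hn hI hB hupd t i h1.symm ⟨j, hj1, hj2, hj3⟩
  · have key : (0:ℝ) < 1 - B (t+1) i := by
      rcases h with ⟨_, h2⟩ | ⟨j, hj1, hj2, hj3⟩
      · exact cb_pos hn hI hBC hupdC t i (by show (0:ℝ) < 1 - B t i; linarith)
      · rcases lt_or_eq_of_le (hB t i).2 with h1 | h1
        · exact cb_pos hn hI hBC hupdC t i (by show (0:ℝ) < 1 - B t i; linarith)
        · refine cb_pos_of_nbr hn hI hBC hupdC t i (by show (1:ℝ) - B t i = 0; linarith) ?_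
          exact ⟨j, hj1, by constructor <;> [show (0:ℝ) < 1 - B t j; skip] <;> linarith⟩
    linarith





lemma cb_int_mono (hn : 0 < n) (hI : ∀ i j, I i j ∈ Set.Icc (0:ℝ) 1)
    (hB : ∀ t i, B t i ∈ Set.Icc (0:ℝ) 1)
    (hupd : ∀ t i, B (t+1) i =
      B t i + (1 / n) * ∑ j, (1 - |B t j - B t i|) * I j i * (B t j - B t i))
    (t : ℕ) (i : Fin n) (h : 0 < B t i ∧ B t i < 1) :
    ∀ s, 0 < B (t+s) i ∧ B (t+s) i < 1 := by
  intro s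
  induction s with
  | zero => exact h
  | succ s ih => exact cb_interior_succ hn hI hB hupd (t+s) i (Or.inl ih)

lemma cb_chain_spread (hn : 0 < n) (hI : ∀ i j, I i j ∈ Set.Icc (0:ℝ) 1)
    (hB : ∀ t i, B t i ∈ Set.Icc (0:ℝ) 1)
    (hupd : ∀ t i, B (t+1) i =
      B t i + (1 / n) * ∑ j, (1 - |B t j - B t i|) * I j i * (B t j - B t i)) :
    ∀ (l : List (Fin n)) (a : Fin n), List.Chain (fun a b => 0 < I a b) a l →
      ∀ t, (0 < B t a ∧ B t a < 1) →
      0 < B (t + l.length) (List.getLast (a::l) (List.cons_ne_nil a l)) ∧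
      B (t + l.length) (List.getLast (a::l) (List.cons_ne_nil a l)) < 1 := by
  intro l
  induction l with
  | nil => intro a _ t ht; simpa using ht
  | cons b l ih =>
    intro a hchain t ht
    simp only [List.Chain, List.isChain_cons_cons] at hchain
    obtain ⟨hab, hchain⟩ := hchain
    have hb : 0 < B (t+1) b ∧ B (t+1) b < 1 :=
      cb_interior_succ hn hI hB hupd t b (Or.inr ⟨a, hab, ht⟩)
    have := ih b hchain (t+1) hb
    rw [List.getLast_cons (List.cons_ne_nil b l)]
    have harith : t + 1 + l.length = t + (b :: l).length := by simp; ring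
    rwa [harith] at this
  
/-- all agents eventually interior -/
lemma cb_int_all (hn : 0 < n) (hI : ∀ i j, I i j ∈ Set.Icc (0:ℝ) 1)
    (hB : ∀ t i, B t i ∈ Set.Icc (0:ℝ) 1)
    (hupd : ∀ t i, B (t+1) i =
      B t i + (1 / n) * ∑ j, (1 - |B t j - B t i|) * I j i * (B t j - B t i))
    (hsc : StronglyConnected I) (k : Fin n) (hk : 0 < B 0 k ∧ B 0 k < 1) :
    ∃ T0, ∀ i, 0 < B T0 i ∧ B T0 i < 1 := by
  have hex : ∀ i : Fin n, ∃ t, 0 < B t i ∧ B t i < 1 := by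
    intro i
    by_cases hik : i = k
    · exact ⟨0, hik ▸ hk⟩
    · obtain ⟨l, ⟨_, hchain'⟩, hhead, hlast⟩ := hsc k i (fun h => hik h.symm)
      have hne : l ≠ [] := by rintro rfl; simp at hhead
      obtain ⟨a, l', rfl⟩ := List.exists_cons_of_ne_nil hne
      have ha : a = k := by simpa using hhead
      subst ha
      have hchain : List.Chain (fun a b => 0 < I a b) a l' := hchain'
      have := cb_chain_spread hn hI hB hupd l' a hchain 0 hk
      have hgl : (a :: l').getLast (List.cons_ne_nil a l') = i := by
        have := List.getLast?_eq_getLast (List.cons_ne_nil a l')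
        rw [this] at hlast
        exact Option.some_injective _ hlast
      rw [hgl] at this
      exact ⟨0 + l'.length, this⟩
  choose τ hτ using hex
  refine ⟨Finset.univ.sup τ, fun i => ?_⟩
  have hle : τ i ≤ Finset.univ.sup τ := Finset.le_sup (Finset.mem_univ i)
  have := cb_int_mono hn hI hB hupd (τ i) i (hτ i) (Finset.univ.sup τ - τ i)
  rwa [Nat.add_sub_cancel' hle] at this

end CB

theorem confirmation_bias_consensus (n : ℕ) (hn : 0 < n)
    (I : Fin n → Fin n → ℝ) (hI : ∀ i j, I i j ∈ Set.Icc (0:ℝ) 1)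
    (hsc : StronglyConnected I)
    (B : ℕ → Fin n → ℝ) (hB : ∀ t i, B t i ∈ Set.Icc (0:ℝ) 1)
    (hupd : ∀ t i, B (t+1) i =
      B t i + (1 / n) * ∑ j, (1 - |B t j - B t i|) * I j i * (B t j - B t i)) :
    ((∃ k : Fin n, B 0 k ≠ 0 ∧ B 0 k ≠ 1) →
      ∃ c : ℝ, ∀ i : Fin n, Filter.Tendsto (fun t => B t i) Filter.atTop (nhds c)) ∧
    ((∀ k : Fin n, B 0 k = 0 ∨ B 0 k = 1) →
      ∀ i t, B (t+1) i = B t i ∧ (B t i = 0 ∨ B t i = 1)) := by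
  constructor
  · -- consensus part
    rintro ⟨k, hk0, hk1⟩
    have hk : 0 < B 0 k ∧ B 0 k < 1 :=
      ⟨lt_of_le_of_ne (hB 0 k).1 (Ne.symm hk0), lt_of_le_of_ne (hB 0 k).2 hk1⟩
    have hU : (Finset.univ : Finset (Fin n)).Nonempty := ⟨⟨0, hn⟩, Finset.mem_univ _⟩
    set m : ℕ → ℝ := fun t => Finset.univ.inf' hU (B t) with hmdef
    set M : ℕ → ℝ := fun t => Finset.univ.sup' hU (B t) with hMdef
    have hmle : ∀ t j, m t ≤ B t j := fun t j => Finset.inf'_le _ (Finset.mem_univ j)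
    have hMge : ∀ t j, B t j ≤ M t := fun t j => Finset.le_sup' _ (Finset.mem_univ j)
    have hmM : ∀ t, m t ≤ M t := fun t => le_trans (hmle t ⟨0, hn⟩) (hMge t ⟨0, hn⟩)
    have hmsucc : ∀ t, m t ≤ m (t+1) := fun t =>
      Finset.le_inf' _ _ (fun j _ => cb_lower hn hI hB hupd t j (m t) (hmle t))
    have hMsucc : ∀ t, M (t+1) ≤ M t := fun t =>
      Finset.sup'_le _ _ (fun j _ => cb_upper hn hI hB hupd t j (M t) (hMge t))
    have hmmono : Monotone m := monotone_nat_of_le_succ hmsucc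
    have hManti : Antitone M := antitone_nat_of_succ_le hMsucc
    have hm0 : ∀ t, 0 ≤ m t := fun t => Finset.le_inf' _ _ (fun j _ => (hB t j).1)
    have hM1 : ∀ t, M t ≤ 1 := fun t => Finset.sup'_le _ _ (fun j _ => (hB t j).2)
    have hMbdd : BddBelow (Set.range M) := ⟨0, by
      rintro x ⟨t, rfl⟩; exact le_trans (hm0 t) (hmM t)⟩
    have hMtend : Filter.Tendsto M Filter.atTop (nhds (⨅ t, M t)) :=
      tendsto_atTop_ciInf hManti hMbdd
    have hgapanti : Antitone (fun t => M t - m t) :=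
      antitone_nat_of_succ_le (fun t => by
        have h1 := hMsucc t; have h2 := hmsucc t; linarith)
    have hgapnn : ∀ t, 0 ≤ M t - m t := fun t => by linarith [hmM t]
    -- the gap tends to 0
    have hgap : Filter.Tendsto (fun t => M t - m t) Filter.atTop (nhds 0) := by
      by_cases hn1 : n = 1
      · subst hn1
        have heq : ∀ t, M t - m t = 0 := by
          intro t
          have h1 : M t ≤ m t := Finset.sup'_le _ _ (fun j _ => Finset.le_inf' _ _
            (fun j' _ => by rw [Subsingleton.elim j j']))
          have h2 := hmM t
          linarith
        exact Filter.Tendsto.congr (fun t => (heq t).symm) tendsto_const_nhds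
      · have hn2 : 2 ≤ n := by omega
        -- an edge exists
        set Pset : Finset (Fin n × Fin n) :=
          Finset.univ.filter (fun p : Fin n × Fin n => 0 < I p.1 p.2) with hPdef
        have hPne : Pset.Nonempty := by
          have hij : (⟨0, by omega⟩ : Fin n) ≠ ⟨1, by omega⟩ := by simp [Fin.ext_iff]
          obtain ⟨l, ⟨_, hchain⟩, hhead, hlast⟩ := hsc ⟨0, by omega⟩ ⟨1, by omega⟩ hij
          have hne : l ≠ [] := by rintro rfl; simp at hhead
          obtain ⟨a, l', rfl⟩ := List.exists_cons_of_ne_nil hne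
          have hl' : l' ≠ [] := by
            rintro rfl
            have h1 : a = (⟨0, by omega⟩ : Fin n) := by simpa using hhead
            have h2 : a = (⟨1, by omega⟩ : Fin n) := by simpa using hlast
            exact hij (h1 ▸ h2 ▸ rfl)
          obtain ⟨b, l'', rfl⟩ := List.exists_cons_of_ne_nil hl'
          simp only [List.Chain', List.isChain_cons_cons] at hchain
          exact ⟨(a, b), Finset.mem_filter.2 ⟨Finset.mem_univ _, hchain.1⟩⟩
        set ι : ℝ := Pset.inf' hPne (fun p => I p.1 p.2) with hιdef
        have hι0 : 0 < ι := by
          rw [hιdef, Finset.lt_inf'_iff]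
          intro p hp
          simpa [hPdef] using (Finset.mem_filter.1 hp).2
        have hι1 : ι ≤ 1 := by
          obtain ⟨p, hp⟩ := hPne
          exact le_trans (Finset.inf'_le _ hp) (hI p.1 p.2).2
        have hιle : ∀ p q : Fin n, 0 < I p q → ι ≤ I p q := fun p q h =>
          Finset.inf'_le (fun p => I p.1 p.2)
            (Finset.mem_filter.2 ⟨Finset.mem_univ (p, q), h⟩)
        -- all agents eventually interior
        obtain ⟨T0, hT0⟩ := cb_int_all hn hI hB hupd hsc k hk
        have hmT0 : 0 < m T0 := by
          rw [hmdef]; rw [Finset.lt_inf'_iff]; exact fun i _ => (hT0 i).1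
        have hMT0 : M T0 < 1 := by
          rw [hMdef]; rw [Finset.sup'_lt_iff]; exact fun i _ => (hT0 i).2
        set φ : ℝ := 1 - (M T0 - m T0) with hφdef
        have hφ0 : 0 < φ := by
          have := hM1 T0; have := hm0 T0; rw [hφdef]; linarith
        have hφ1 : φ ≤ 1 := by have := hmM T0; rw [hφdef]; linarith
        have hn' : (0:ℝ) < n := by exact_mod_cast hn
        set δ : ℝ := (1/n) * (φ * ι) with hδdef
        have hδ0 : 0 < δ := by rw [hδdef]; positivity
        have hδn : δ ≤ 1/n := by
          rw [hδdef]
          have h1 : φ * ι ≤ 1 := by nlinarith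
          exact mul_le_of_le_one_right (by positivity) h1
        have hδ1 : δ ≤ 1 := le_trans hδn (by rw [div_le_one hn']; exact_mod_cast hn)
        set q : ℕ := n - 1 with hqdef
        have hq1 : 1 ≤ q := by omega
        -- window contraction
        have hwin : ∀ T, T0 ≤ T → M (T + q) ≤ M T - δ^q * (M T - m T) := by
          intro T hT
          have hΔnn : 0 ≤ M T - m T := hgapnn T
          have hmTle : ∀ t, T ≤ t → ∀ j, m T ≤ B t j := fun t ht j =>
            le_trans (hmmono ht) (hmle t j)
          have hMTge : ∀ t, T ≤ t → ∀ j, B t j ≤ M T := fun t ht j =>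
            le_trans (hMge t j) (hManti ht)
          have hstepself : ∀ t, T ≤ t → ∀ i s, B t i ≤ M T - δ^s * (M T - m T) →
              B (t+1) i ≤ M T - δ^(s+1) * (M T - m T) := by
            intro t ht i s hle
            have h1 := cb_convex hn hI hB hupd t i i (m T) (M T) δ
              (hmTle t ht) (hMTge t ht) hδ0.le (Or.inl ⟨rfl, hδn⟩)
            have h2 : δ * B t i ≤ δ * (M T - δ^s * (M T - m T)) :=
              mul_le_mul_of_nonneg_left hle hδ0.le
            have h3 : δ * (M T - δ^s * (M T - m T)) + (1-δ) * M T
                = M T - δ^(s+1) * (M T - m T) := by rw [pow_succ]; ring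
            linarith
          have hstepedge : ∀ t, T ≤ t → ∀ i j, 0 < I j i → ∀ s,
              B t j ≤ M T - δ^s * (M T - m T) →
              B (t+1) i ≤ M T - δ^(s+1) * (M T - m T) := by
            intro t ht i j hIe s hle
            have hφT : φ ≤ 1 - (M T - m T) := by
              have h1 := hManti hT; have h2 := hmmono hT; rw [hφdef]; linarith
            have hδle : δ ≤ (1/n) * ((1 - (M T - m T)) * I j i) := by
              rw [hδdef]
              apply mul_le_mul_of_nonneg_left _ (by positivity)
              apply mul_le_mul hφT (hιle j i hIe) hι0.le (by linarith)
            have h1 := cb_convex hn hI hB hupd t i j (m T) (M T) δ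
              (hmTle t ht) (hMTge t ht) hδ0.le (Or.inr hδle)
            have h2 : δ * B t j ≤ δ * (M T - δ^s * (M T - m T)) :=
              mul_le_mul_of_nonneg_left hle hδ0.le
            have h3 : δ * (M T - δ^s * (M T - m T)) + (1-δ) * M T
                = M T - δ^(s+1) * (M T - m T) := by rw [pow_succ]; ring
            linarith
          have hpush : ∀ r (i : Fin n) s, B (T+s) i ≤ M T - δ^s * (M T - m T) →
              B (T+s+r) i ≤ M T - δ^(s+r) * (M T - m T) := by
            intro r
            induction r with
            | zero => intro i s h; simpa using h
            | succ r ih =>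
              intro i s h
              have h1 := ih i s h
              have h2 := hstepself (T+s+r) (by omega) i (s+r) h1
              have e1 : T+s+r+1 = T+s+(r+1) := by omega
              have e2 : s+r+1 = s+(r+1) := by omega
              rwa [e1, e2] at h2
          have hchainprop : ∀ (l : List (Fin n)) (a : Fin n),
              List.Chain (fun a b => 0 < I a b) a l → ∀ s,
              B (T+s) a ≤ M T - δ^s * (M T - m T) →
              B (T+s+l.length) (List.getLast (a::l) (List.cons_ne_nil a l))
                ≤ M T - δ^(s+l.length) * (M T - m T) := by
            intro l
            induction l with
            | nil => intro a _ s h; simpa using h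
            | cons b l ih =>
              intro a hchain s h
              simp only [List.Chain, List.isChain_cons_cons] at hchain
              have h1 := hstepedge (T+s) (by omega) b a hchain.1 s h
              have e1 : T+s+1 = T+(s+1) := by omega
              rw [e1] at h1
              have h2 := ih b hchain.2 (s+1) h1
              rw [List.getLast_cons (List.cons_ne_nil b l)]
              have e2 : T+(s+1)+l.length = T+s+(b::l).length := by simp; omega
              have e3 : (s+1)+l.length = s+(b::l).length := by simp; omega
              rwa [e2, e3] at h2
          obtain ⟨i0, -, hi0⟩ := Finset.exists_mem_eq_inf' hU (B T)
          have hbase : B (T+0) i0 ≤ M T - δ^0 * (M T - m T) := by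
            have : B T i0 = m T := hi0.symm
            rw [pow_zero]; simpa [this] using (by linarith : B T i0 ≤ M T - 1 * (M T - m T))
          have hball : ∀ i, B (T+q) i ≤ M T - δ^q * (M T - m T) := by
            intro i
            by_cases hii : i = i0
            · subst hii
              have := hpush q i 0 hbase
              simpa using this
            · obtain ⟨l, ⟨hnodup, hchain'⟩, hhead, hlast⟩ := hsc i0 i (fun h => hii h.symm)
              have hne : l ≠ [] := by rintro rfl; simp at hhead
              obtain ⟨a, l', rfl⟩ := List.exists_cons_of_ne_nil hne
              have ha : a = i0 := by simpa using hhead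
              subst ha
              have hchain : List.Chain (fun a b => 0 < I a b) a l' := hchain'
              have hgl : (a :: l').getLast (List.cons_ne_nil a l') = i := by
                have h1 := List.getLast?_eq_getLast (List.cons_ne_nil a l')
                rw [h1] at hlast
                exact Option.some_injective _ hlast
              have hlen : l'.length ≤ q := by
                have h1 : (a :: l').length ≤ n := by
                  have := hnodup.length_le_card
                  simpa using this
                simp at h1; omega
              have h2 := hchainprop l' a hchain 0 hbase
              rw [hgl] at h2
              have e0 : T + 0 + l'.length = T + (0 + l'.length) := by omega
              rw [e0] at h2
              have h3 := hpush (q - l'.length) i (0 + l'.length) h2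
              have e1 : T + (0 + l'.length) + (q - l'.length) = T + q := by omega
              have e2 : 0 + l'.length + (q - l'.length) = q := by omega
              rwa [e1, e2] at h3
          exact Finset.sup'_le _ _ (fun i _ => hball i)
        -- iterate the contraction
        set ρ : ℝ := 1 - δ^q with hρdef
        have hρ0 : 0 ≤ ρ := by
          have : δ^q ≤ 1 := pow_le_one₀ hδ0.le hδ1
          rw [hρdef]; linarith
        have hρ1 : ρ < 1 := by
          have : 0 < δ^q := pow_pos hδ0 q
          rw [hρdef]; linarith
        have hiter : ∀ kk : ℕ, M (T0 + kk*q) - m (T0 + kk*q) ≤ ρ^kk * (M T0 - m T0) := by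
          intro kk
          induction kk with
          | zero => simp
          | succ kk ih =>
            set T := T0 + kk*q with hTdef
            have hT : T0 ≤ T := by omega
            have h1 := hwin T hT
            have h2 : m T ≤ m (T+q) := hmmono (by omega)
            have h3 : M (T+q) - m (T+q) ≤ ρ * (M T - m T) := by
              rw [hρdef]; linarith
            have h4 : ρ * (M T - m T) ≤ ρ * (ρ^kk * (M T0 - m T0)) :=
              mul_le_mul_of_nonneg_left ih hρ0
            have e1 : T0 + (kk+1)*q = T + q := by rw [hTdef]; ring
            rw [e1, pow_succ]
            calc M (T+q) - m (T+q) ≤ ρ * (ρ^kk * (M T0 - m T0)) := le_trans h3 h4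
              _ = ρ^kk * ρ * (M T0 - m T0) := by ring
        -- conclude gap → 0
        have hgapbdd : BddBelow (Set.range (fun t => M t - m t)) :=
          ⟨0, by rintro x ⟨t, rfl⟩; exact hgapnn t⟩
        have hgaptend : Filter.Tendsto (fun t => M t - m t) Filter.atTop
            (nhds (⨅ t, M t - m t)) := tendsto_atTop_ciInf hgapanti hgapbdd
        have hL0 : (⨅ t, M t - m t) = 0 := by
          apply le_antisymm
          · have hle : ∀ kk : ℕ, (⨅ t, M t - m t) ≤ ρ^kk * (M T0 - m T0) := fun kk =>
              le_trans (ciInf_le hgapbdd (T0 + kk*q)) (hiter kk)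
            have htend : Filter.Tendsto (fun kk : ℕ => ρ^kk * (M T0 - m T0))
                Filter.atTop (nhds 0) := by
              have h1 := (tendsto_pow_atTop_nhds_zero_of_lt_one hρ0 hρ1).mul_const
                (M T0 - m T0)
              simpa using h1
            exact ge_of_tendsto' htend hle
          · exact le_ciInf (fun t => hgapnn t)
        rw [hL0] at hgaptend
        exact hgaptend
    -- assemble the limits
    refine ⟨⨅ t, M t, fun i => ?_⟩
    have hmt : Filter.Tendsto m Filter.atTop (nhds (⨅ t, M t)) := by
      have h1 := hMtend.sub hgap
      rw [sub_zero] at h1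
      exact Filter.Tendsto.congr (fun t => by ring) h1
    exact tendsto_of_tendsto_of_tendsto_of_le_of_le hmt hMtend
      (fun t => hmle t i) (fun t => hMge t i)
  · -- frozen part
    intro hall
    have hstep : ∀ t, (∀ j, B t j = 0 ∨ B t j = 1) → ∀ i, B (t+1) i = B t i := by
      intro t ht i
      rw [hupd t i]
      have hz : ∑ j, (1 - |B t j - B t i|) * I j i * (B t j - B t i) = 0 := by
        apply Finset.sum_eq_zero
        intro j _
        rcases ht j with hj | hj <;> rcases ht i with hi | hi <;> rw [hj, hi] <;> norm_num
      rw [hz]; ring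
    have hH : ∀ t, ∀ j, B t j = 0 ∨ B t j = 1 := by
      intro t
      induction t with
      | zero => exact hall
      | succ t ih => intro j; rw [hstep t ih j]; exact ih j
    exact fun i t => ⟨hstep t (hH t) i, hH t i⟩
end
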